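/- arXiv:2210.07438 — 5 statements merged into one kernel-verified Lean document; each statement's English description precedes it below -/
import Mathlib

section
/- If a ∈ ℓ^1(ℤ) is a real sequence, then for every λ > 0, the cardinality of {m ∈ ℤ : M′a(m) > 4λ} is at most 3 times the cardinality of {m ∈ ℤ : M_d a(m) > λ}. -/
open scoped ENNReal
open MeasureTheory

/-- An interval in ℤ: a nonempty finite set of consecutive integers. -/
def IsIntervalZ (I : Finset ℤ) : Prop := ∃ n m : ℤ, n ≤ m ∧ I = Finset.Icc n m

/-- The dyadic interval I_{N,j} = {(j-1)2^N + 1, …, j·2^N}. -/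
noncomputable def dyadicI (N : ℕ) (j : ℤ) : Finset ℤ := Finset.Icc ((j - 1) * 2 ^ N + 1) (j * 2 ^ N)

/-- A dyadic interval is one of the form I_{N,j} with N a positive integer. -/
def IsDyadicZ (I : Finset ℤ) : Prop := ∃ N : ℕ, 0 < N ∧ ∃ j : ℤ, I = dyadicI N j

/-- The (uncentered) Hardy–Littlewood maximal operator. -/
noncomputable def Mop (a : ℤ → ℝ) (m : ℤ) : ℝ≥0∞ :=
  ⨆ (I : Finset ℤ) (_ : IsIntervalZ I) (_ : m ∈ I),
    (∑ n ∈ I, ENNReal.ofReal |a n|) / I.card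

/-- The centered Hardy–Littlewood maximal operator
`M′a(m) = sup_{r>0} (1/(2r)) ∑_{n=-r}^{r} |a(m-n)|`. -/
noncomputable def Mc (a : ℤ → ℝ) (m : ℤ) : ℝ≥0∞ :=
  ⨆ (r : ℕ) (_ : 0 < r),
    (∑ n ∈ Finset.Icc (-(r : ℤ)) (r : ℤ), ENNReal.ofReal |a (m - n)|) / (2 * (r : ℝ≥0∞))

/-- The dyadic maximal operator. -/
noncomputable def Md (a : ℤ → ℝ) (m : ℤ) : ℝ≥0∞ :=
  ⨆ (I : Finset ℤ) (_ : IsDyadicZ I) (_ : m ∈ I),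
    (∑ k ∈ I, ENNReal.ofReal |a k|) / I.card

/-- The average `a_I` of a sequence on a finite set. -/
noncomputable def avgI (a : ℤ → ℝ) (I : Finset ℤ) : ℝ := (∑ m ∈ I, a m) / I.card

/-- The sharp maximal operator. -/
noncomputable def Msharp (a : ℤ → ℝ) (m : ℤ) : ℝ≥0∞ :=
  ⨆ (I : Finset ℤ) (_ : IsIntervalZ I) (_ : m ∈ I),
    (∑ n ∈ I, ENNReal.ofReal |a n - avgI a I|) / I.card

/- ### Auxiliary machinery -/

private lemma pow_pos' (N : ℕ) : (0:ℤ) < 2 ^ N := by positivity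

/-- The index of the dyadic interval at level `N` containing `x`. -/
def jIdx (x : ℤ) (N : ℕ) : ℤ := (x - 1) / (2 ^ N) + 1

/-- The dyadic interval at level `N` containing `x`. -/
noncomputable def K (x : ℤ) (N : ℕ) : Finset ℤ := dyadicI N (jIdx x N)

private lemma mem_dyadicI {N : ℕ} {j x : ℤ} :
    x ∈ dyadicI N j ↔ (j - 1) * 2 ^ N ≤ x - 1 ∧ x - 1 < j * 2 ^ N := by
  simp only [dyadicI, Finset.mem_Icc]; omega

private lemma mem_K (x : ℤ) (N : ℕ) : x ∈ K x N := by
  rw [K, mem_dyadicI]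
  constructor
  · simpa [jIdx] using Int.ediv_mul_le (x-1) (pow_pos' N).ne'
  · simpa [jIdx] using Int.lt_ediv_add_one_mul_self (x-1) (pow_pos' N)

private lemma jIdx_eq_of_mem {N : ℕ} {j x : ℤ} (h : x ∈ dyadicI N j) : jIdx x N = j := by
  rw [mem_dyadicI] at h
  have h1 : j - 1 ≤ (x-1) / 2^N := (Int.le_ediv_iff_mul_le (pow_pos' N)).2 h.1
  have h2 : (x-1) / 2^N < j := (Int.ediv_lt_iff_lt_mul (pow_pos' N)).2 h.2
  simp only [jIdx]; omega

private lemma K_eq_of_mem {N : ℕ} {x y : ℤ} (h : y ∈ K x N) : K y N = K x N := by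
  rw [K, jIdx_eq_of_mem h]; rfl

private lemma K_subset {x : ℤ} {N M : ℕ} (h : N ≤ M) : K x N ⊆ K x M := by
  set qN := (x-1) / 2^N with hqN
  set qM := (x-1) / 2^M with hqM
  have h1N : qN * 2^N ≤ x - 1 := Int.ediv_mul_le _ (pow_pos' N).ne'
  have h2N : x - 1 < (qN + 1) * 2^N := Int.lt_ediv_add_one_mul_self _ (pow_pos' N)
  have h1M : qM * 2^M ≤ x - 1 := Int.ediv_mul_le _ (pow_pos' M).ne'
  have h2M : x - 1 < (qM + 1) * 2^M := Int.lt_ediv_add_one_mul_self _ (pow_pos' M)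
  have hdvd : (2:ℤ)^N ∣ 2^M := pow_dvd_pow 2 h
  have hL : qM * 2^M ≤ qN * 2^N := by
    by_contra hc
    push_neg at hc
    have hd : (2:ℤ)^N ∣ qM * 2^M - qN * 2^N :=
      dvd_sub (Dvd.dvd.mul_left hdvd qM) (Dvd.dvd.mul_left dvd_rfl qN)
    have := Int.le_of_dvd (by omega) hd
    nlinarith
  have hR : (qN + 1) * 2^N ≤ (qM + 1) * 2^M := by
    by_contra hc
    push_neg at hc
    have hd : (2:ℤ)^N ∣ (qN+1) * 2^N - (qM+1) * 2^M :=
      dvd_sub (Dvd.dvd.mul_left dvd_rfl _) (Dvd.dvd.mul_left hdvd _)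
    have := Int.le_of_dvd (by omega) hd
    nlinarith
  intro y hy
  simp only [K, dyadicI, jIdx, Finset.mem_Icc, ← hqN, ← hqM] at hy ⊢
  constructor <;> nlinarith [hy.1, hy.2]

/-- The (ℝ≥0∞-valued) sum of `|a|` over a finite set. -/
noncomputable def SJ (a : ℤ → ℝ) (I : Finset ℤ) : ℝ≥0∞ := ∑ k ∈ I, ENNReal.ofReal |a k|

/-- The dyadic interval at level `N` containing `x` has average exceeding `lam`. -/
def Good (a : ℤ → ℝ) (lam : ℝ) (N : ℕ) (x : ℤ) : Prop :=
  ENNReal.ofReal lam * 2 ^ N < SJ a (K x N)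

/-- The largest level `≤ b` at which the dyadic interval containing `y` is good. -/
noncomputable def lev (a : ℤ → ℝ) (lam : ℝ) (b : ℕ) (y : ℤ) : ℕ :=
  @Nat.findGreatest (fun M => Good a lam M y) (Classical.decPred _) b

private lemma lev_spec {a : ℤ → ℝ} {lam : ℝ} {b N : ℕ} {x : ℤ} (hNb : N ≤ b)
    (hg : Good a lam N x) : Good a lam (lev a lam b x) x := by
  classical
  unfold lev
  exact Nat.findGreatest_spec (P := fun M => Good a lam M x) hNb hg

private lemma le_lev {a : ℤ → ℝ} {lam : ℝ} {b N : ℕ} {x : ℤ} (hNb : N ≤ b)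
    (hg : Good a lam N x) : N ≤ lev a lam b x := by
  classical
  unfold lev
  exact Nat.le_findGreatest hNb hg

private lemma lev_le {a : ℤ → ℝ} {lam : ℝ} {b : ℕ} {x : ℤ} : lev a lam b x ≤ b :=
  @Nat.findGreatest_le (fun M => Good a lam M x) (Classical.decPred _) b

private lemma lev_is_greatest {a : ℤ → ℝ} {lam : ℝ} {b M : ℕ} {x : ℤ}
    (hk : lev a lam b x < M) (hM : M ≤ b) : ¬ Good a lam M x := by
  classical
  unfold lev at hk
  exact Nat.findGreatest_is_greatest hk hM

private lemma card_K (y : ℤ) (L : ℕ) : ((K y L).card : ℝ≥0∞) = 2 ^ L := by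
  rw [K, dyadicI, Int.card_Icc,
    show (jIdx y L * 2^L + 1 - ((jIdx y L - 1) * 2^L + 1)) = ((2^L : ℕ) : ℤ) from by
      push_cast; ring,
    Int.toNat_natCast]
  push_cast
  ring

private lemma good_lt_Md {a : ℤ → ℝ} {lam : ℝ} {L : ℕ} (hL : 0 < L) {y : ℤ}
    (hg : Good a lam L y) : ENNReal.ofReal lam < Md a y := by
  have h1 : ENNReal.ofReal lam < SJ a (K y L) / ((K y L).card : ℝ≥0∞) := by
    rw [card_K, ENNReal.lt_div_iff_mul_lt
      (Or.inl (pow_ne_zero _ (two_ne_zero)))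
      (Or.inl (ENNReal.pow_ne_top ENNReal.ofNat_ne_top))]
    exact hg
  refine lt_of_lt_of_le h1 ?_
  refine le_iSup_of_le (K y L) ?_
  refine le_iSup_of_le ⟨L, hL, jIdx y L, rfl⟩ ?_
  exact le_iSup_of_le (mem_K y L) le_rfl

private lemma lemA {a : ℤ → ℝ} {lam : ℝ} {m : ℤ}
    (h : ENNReal.ofReal (4 * lam) < Mc a m) :
    ∃ N : ℕ, ∃ x : ℤ, 0 < N ∧ Good a lam N x ∧ x - 2^N ≤ m ∧ m ≤ x + 2^N := by
  simp only [Mc, lt_iSup_iff] at h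
  obtain ⟨r, hr, h⟩ := h
  have hsum : (∑ n ∈ Finset.Icc (-(r : ℤ)) (r : ℤ), ENNReal.ofReal |a (m - n)|)
      = SJ a (Finset.Icc (m - r) (m + r)) := by
    rw [SJ]
    refine Finset.sum_nbij' (fun n => m - n) (fun k => m - k) ?_ ?_ ?_ ?_ ?_ <;>
      intros <;> simp_all [Finset.mem_Icc] <;> omega
  rw [hsum] at h
  have h2r : (2 * (r:ℝ≥0∞)) ≠ 0 := by simp [hr.ne']
  have h2rt : (2 * (r:ℝ≥0∞)) ≠ ⊤ := ENNReal.mul_ne_top (by norm_num) (ENNReal.natCast_ne_top r)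
  have hP : ENNReal.ofReal (4*lam) * (2 * r) < SJ a (Finset.Icc (m - r) (m + r)) :=
    (ENNReal.lt_div_iff_mul_lt (Or.inl h2r) (Or.inl h2rt)).1 h
  set N := Nat.clog 2 (2*r+1) with hN
  have hNpos : 0 < N := Nat.clog_pos one_lt_two (by omega)
  have hN1 : 2*r+1 ≤ 2^N := Nat.le_pow_clog one_lt_two _
  have hN2 : 2^N ≤ 4*r := by
    have h3 : 2^(N-1) < 2*r+1 := Nat.pow_pred_clog_lt_self one_lt_two (by omega)
    have h4 : 2^N = 2*2^(N-1) := by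
      conv_lhs => rw [show N = (N-1)+1 by omega]
      ring
    omega
  set x1 : ℤ := m - r with hx1
  set x2 : ℤ := m + r with hx2
  set j : ℤ := jIdx x1 N with hj
  set d : ℤ := 2^N with hd
  have hdpos : 0 < d := pow_pos' N
  have hcast1 : 2*(r:ℤ)+1 ≤ d := by rw [hd]; exact_mod_cast hN1
  have hcast2 : d ≤ 4*(r:ℤ) := by rw [hd]; exact_mod_cast hN2
  have hB : j * d = (j-1)*d + d := by ring
  have hC : (j+1) * d = (j-1)*d + 2*d := by ring
  have hD : (j+1-1) * d = (j-1)*d + d := by ring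
  have hmx1 : (j-1)*d + 1 ≤ x1 ∧ x1 ≤ j * d := by
    have := mem_K x1 N
    rw [K, ← hj, dyadicI, ← hd, Finset.mem_Icc] at this
    omega
  have hcover : Finset.Icc x1 x2 ⊆ K x1 N ∪ K x2 N := by
    by_cases hc : x2 ≤ j * d
    · intro k hk
      rw [Finset.mem_Icc] at hk
      rw [Finset.mem_union, K, ← hj, dyadicI, ← hd, Finset.mem_Icc]
      left; omega
    · push_neg at hc
      have hx2mem : x2 ∈ dyadicI N (j+1) := by
        rw [dyadicI, ← hd, Finset.mem_Icc]
        omega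
      have hK2 : K x2 N = dyadicI N (j+1) := by rw [K, jIdx_eq_of_mem hx2mem]
      intro k hk
      rw [Finset.mem_Icc] at hk
      rw [Finset.mem_union, K, ← hj, dyadicI, ← hd, Finset.mem_Icc, hK2, dyadicI, ← hd,
        Finset.mem_Icc]
      omega
  have hsub : SJ a (Finset.Icc x1 x2) ≤ SJ a (K x1 N) + SJ a (K x2 N) := by
    calc SJ a (Finset.Icc x1 x2) ≤ SJ a (K x1 N ∪ K x2 N) :=
          Finset.sum_le_sum_of_subset hcover
    _ ≤ SJ a (K x1 N ∪ K x2 N) + SJ a (K x1 N ∩ K x2 N) := le_self_add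
    _ = SJ a (K x1 N) + SJ a (K x2 N) := Finset.sum_union_inter
  have hbig : Good a lam N x1 ∨ Good a lam N x2 := by
    by_contra hcon
    push_neg at hcon
    rw [Good, not_lt, Good, not_lt] at hcon
    have hpow : ((2:ℝ≥0∞))^N ≤ 4 * r := by
      have : ((2^N : ℕ) : ℝ≥0∞) ≤ ((4*r : ℕ) : ℝ≥0∞) := Nat.cast_le.2 hN2
      push_cast at this
      convert this using 2
    have h4 : ENNReal.ofReal (4*lam) * (2 * r) = 2 * (ENNReal.ofReal lam * (4 * r)) := by
      rw [ENNReal.ofReal_mul (by norm_num : (0:ℝ) ≤ 4)]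
      rw [show ENNReal.ofReal 4 = 4 from by norm_num [ENNReal.ofReal_ofNat]]
      ring
    have hfin : SJ a (Finset.Icc x1 x2) ≤ ENNReal.ofReal (4*lam) * (2*r) := by
      rw [h4]
      calc SJ a (Finset.Icc x1 x2) ≤ SJ a (K x1 N) + SJ a (K x2 N) := hsub
      _ ≤ ENNReal.ofReal lam * 2^N + ENNReal.ofReal lam * 2^N := add_le_add hcon.1 hcon.2
      _ = 2 * (ENNReal.ofReal lam * 2^N) := by ring
      _ ≤ 2 * (ENNReal.ofReal lam * (4*r)) := by gcongr
    exact absurd hP (not_lt.2 hfin)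
  rcases hbig with hg | hg
  · exact ⟨N, x1, hNpos, hg, by omega, by omega⟩
  · exact ⟨N, x2, hNpos, hg, by omega, by omega⟩

/-- `|{M′a > 4λ}| ≤ 3 |{M_d a > λ}|` for `a ∈ ℓ¹(ℤ)`. -/
theorem statement2 (a : ℤ → ℝ) (ha : Summable fun m : ℤ => |a m|)
    (lam : ℝ) (hlam : 0 < lam) :
    Measure.count {m : ℤ | ENNReal.ofReal (4 * lam) < Mc a m} ≤
      3 * Measure.count {m : ℤ | ENNReal.ofReal lam < Md a m} := by
  classical
  set E := {m : ℤ | ENNReal.ofReal lam < Md a m} with hE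
  by_cases hEf : E.Finite
  · -- the main (finite) case
    set T := ∑' m : ℤ, ENNReal.ofReal |a m| with hT
    have hTne : T ≠ ⊤ := by
      rw [hT, ← ENNReal.ofReal_tsum_of_nonneg (fun n => abs_nonneg _) ha]
      exact ENNReal.ofReal_ne_top
    have hSJle : ∀ I : Finset ℤ, SJ a I ≤ T := fun I => ENNReal.sum_le_tsum I
    have hlam0 : ENNReal.ofReal lam ≠ 0 := (ENNReal.ofReal_pos.2 hlam).ne'
    obtain ⟨b, hb⟩ : ∃ b : ℕ, ∀ (N : ℕ) (x : ℤ), Good a lam N x → N ≤ b := by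
      obtain ⟨n, hn⟩ := ENNReal.exists_nat_gt (ENNReal.div_lt_top hTne hlam0).ne
      refine ⟨n, fun N x hg => ?_⟩
      have h1 : (2:ℝ≥0∞)^N < T / ENNReal.ofReal lam := by
        rw [ENNReal.lt_div_iff_mul_lt (Or.inl hlam0) (Or.inl ENNReal.ofReal_ne_top)]
        calc (2:ℝ≥0∞)^N * ENNReal.ofReal lam = ENNReal.ofReal lam * 2^N := mul_comm _ _
        _ < SJ a (K x N) := hg
        _ ≤ T := hSJle _
      have h2 : (2:ℝ≥0∞)^N < ((2^n : ℕ) : ℝ≥0∞) :=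
        lt_of_lt_of_le (h1.trans hn) (by exact_mod_cast (Nat.lt_two_pow_self (n := n)).le)
      have h4 : (2:ℕ)^N < 2^n := by exact_mod_cast h2
      exact le_of_lt ((Nat.pow_lt_pow_iff_right one_lt_two).1 h4)
    set f : ℤ × ℤ → ℤ := fun p => p.2 - p.1 * 2 ^ (lev a lam b p.2) with hf
    set G : Finset (ℤ × ℤ) := ({-1, 0, 1} : Finset ℤ) ×ˢ hEf.toFinset with hG
    have key : {m : ℤ | ENNReal.ofReal (4 * lam) < Mc a m} ⊆ ↑(G.image f) := by
      intro m hm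
      obtain ⟨N, x, hNpos, hgx, hm1, hm2⟩ := lemA hm
      have hNb : N ≤ b := hb N x hgx
      set L := lev a lam b x with hL
      have hgxL : Good a lam L x := lev_spec hNb hgx
      have hNL : N ≤ L := le_lev hNb hgx
      have hLb : L ≤ b := lev_le
      have hLpos : 0 < L := lt_of_lt_of_le hNpos hNL
      set j : ℤ := jIdx x L with hj
      set dL : ℤ := 2 ^ L with hdL
      have hdLpos : 0 < dL := pow_pos' L
      have hBB : j * dL = (j-1)*dL + dL := by ring
      have hxmem : (j-1)*dL + 1 ≤ x ∧ x ≤ j * dL := by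
        have := mem_K x L
        rw [K, ← hj, dyadicI, ← hdL, Finset.mem_Icc] at this
        omega
      have hdN : (2:ℤ)^N ≤ dL := by
        rw [hdL]
        exact_mod_cast Nat.pow_le_pow_right (by norm_num) hNL
      obtain ⟨s, hs, hyK⟩ :
          ∃ s : ℤ, s ∈ ({-1, 0, 1} : Finset ℤ) ∧ m + s * dL ∈ K x L := by
        by_cases h1 : m ≤ (j-1)*dL
        · refine ⟨1, by simp, ?_⟩
          rw [K, ← hj, dyadicI, ← hdL, Finset.mem_Icc]
          omega
        · by_cases h2 : m ≤ j * dL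
          · refine ⟨0, by simp, ?_⟩
            rw [K, ← hj, dyadicI, ← hdL, Finset.mem_Icc]
            omega
          · refine ⟨-1, by simp, ?_⟩
            rw [K, ← hj, dyadicI, ← hdL, Finset.mem_Icc]
            omega
      set y : ℤ := m + s * dL with hy
      have hgy : Good a lam L y := by
        show ENNReal.ofReal lam * 2 ^ L < SJ a (K y L)
        rw [K_eq_of_mem hyK]
        exact hgxL
      have hlevy : lev a lam b y = L := by
        refine le_antisymm ?_ (le_lev hLb hgy)
        by_contra hcon
        push_neg at hcon
        have hgy2 : Good a lam (lev a lam b y) y := lev_spec hLb hgy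
        have hxK : x ∈ K y (lev a lam b y) := by
          refine K_subset (le_of_lt hcon) ?_
          rw [K_eq_of_mem hyK]
          exact mem_K x L
        have hgx2 : Good a lam (lev a lam b y) x := by
          show ENNReal.ofReal lam * 2 ^ (lev a lam b y) < SJ a (K x (lev a lam b y))
          rw [K_eq_of_mem hxK]
          exact hgy2
        exact absurd hgx2 (lev_is_greatest (hL ▸ hcon) lev_le)
      have hyE : y ∈ hEf.toFinset := by
        rw [Set.Finite.mem_toFinset]
        exact good_lt_Md hLpos hgy
      rw [Finset.coe_image, Set.mem_image]
      refine ⟨(s, y), by rw [hG]; rw [Finset.mem_coe, Finset.mem_product]; exact ⟨hs, hyE⟩, ?_⟩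
      show y - s * 2 ^ (lev a lam b y) = m
      rw [hlevy, ← hdL, hy]
      ring
    refine le_trans (measure_mono key) ?_
    rw [Measure.count_apply_finset]
    have hcard : (G.image f).card ≤ 3 * hEf.toFinset.card := by
      refine le_trans Finset.card_image_le ?_
      rw [hG, Finset.card_product]
      have : ({-1, 0, 1} : Finset ℤ).card = 3 := by decide
      rw [this]
    calc ((G.image f).card : ℝ≥0∞) ≤ ((3 * hEf.toFinset.card : ℕ) : ℝ≥0∞) :=
          Nat.cast_le.2 hcard
    _ = 3 * Measure.count E := by
          rw [Measure.count_apply_finite E hEf]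
          push_cast
          ring
  · rw [Measure.count_apply_infinite hEf]
    rw [ENNReal.mul_top (by norm_num : (3:ℝ≥0∞) ≠ 0)]
    exact le_top
end

section
/- Let 1 < p < ∞ and let a : ℤ → ℝ be a sequence such that M_d a ∈ ℓ^p(ℤ). Then there is a constant C depending only on p (one may take C = 3·4^p) such that Σ_{m∈ℤ} (M′a(m))^p ≤ C · Σ_{m∈ℤ} (M_d a(m))^p. -/
open scoped ENNReal
open MeasureTheory

namespace Stmt3Aux


lemma two_pow_pos (N : ℕ) : (0:ℤ) < 2 ^ N := by positivity

lemma mem_dyadicI {N : ℕ} {j x : ℤ} :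
    x ∈ dyadicI N j ↔ (j - 1) * 2 ^ N < x ∧ x ≤ j * 2 ^ N := by
  rw [dyadicI, Finset.mem_Icc, Int.add_one_le_iff]

lemma card_dyadicI (N : ℕ) (j : ℤ) : (dyadicI N j).card = 2 ^ N := by
  rw [dyadicI, Int.card_Icc]
  have h : j * 2 ^ N + 1 - ((j - 1) * 2 ^ N + 1) = ((2 ^ N : ℕ) : ℤ) := by push_cast; ring
  rw [h, Int.toNat_natCast]

lemma left_mem_dyadicI (N : ℕ) (j : ℤ) : (j - 1) * 2 ^ N + 1 ∈ dyadicI N j := by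
  rw [mem_dyadicI]
  have h := two_pow_pos N
  have e : (j - 1) * 2 ^ N + 2 ^ N = j * 2 ^ N := by ring
  exact ⟨by linarith, by linarith⟩

lemma right_mem_dyadicI (N : ℕ) (j : ℤ) : j * 2 ^ N ∈ dyadicI N j := by
  rw [mem_dyadicI]
  have h := two_pow_pos N
  have e : (j - 1) * 2 ^ N + 2 ^ N = j * 2 ^ N := by ring
  exact ⟨by linarith, le_refl _⟩

lemma dyadicI_nonempty (N : ℕ) (j : ℤ) : (dyadicI N j).Nonempty :=
  ⟨j * 2 ^ N, right_mem_dyadicI N j⟩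

lemma dyadicI_subset {N M : ℕ} {j i x : ℤ} (hNM : N ≤ M)
    (hx : x ∈ dyadicI N j) (hx' : x ∈ dyadicI M i) : dyadicI N j ⊆ dyadicI M i := by
  obtain ⟨d, rfl⟩ := Nat.exists_eq_add_of_le hNM
  rw [mem_dyadicI] at hx hx'
  have hpow : (2:ℤ) ^ (N + d) = 2 ^ d * 2 ^ N := by rw [pow_add]; ring
  have h2N := two_pow_pos N
  have h1 : j ≤ i * 2 ^ d := by
    have hlt : (j - 1) * 2 ^ N < (i * 2 ^ d) * 2 ^ N := by
      calc (j - 1) * 2 ^ N < x := hx.1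
        _ ≤ i * 2 ^ (N + d) := hx'.2
        _ = (i * 2 ^ d) * 2 ^ N := by rw [hpow]; ring
    have := lt_of_mul_lt_mul_right hlt h2N.le
    omega
  have h2 : (i - 1) * 2 ^ d ≤ j - 1 := by
    have hlt : ((i - 1) * 2 ^ d) * 2 ^ N < j * 2 ^ N := by
      calc ((i - 1) * 2 ^ d) * 2 ^ N = (i - 1) * 2 ^ (N + d) := by rw [hpow]; ring
        _ < x := hx'.1
        _ ≤ j * 2 ^ N := hx.2
    have := lt_of_mul_lt_mul_right hlt h2N.le
    omega
  rw [dyadicI, dyadicI]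
  apply Finset.Icc_subset_Icc
  · have h3 : (i - 1) * 2 ^ (N + d) ≤ (j - 1) * 2 ^ N := by
      calc (i - 1) * 2 ^ (N + d) = ((i - 1) * 2 ^ d) * 2 ^ N := by rw [hpow]; ring
        _ ≤ (j - 1) * 2 ^ N := mul_le_mul_of_nonneg_right h2 h2N.le
    linarith
  · calc j * 2 ^ N ≤ (i * 2 ^ d) * 2 ^ N := mul_le_mul_of_nonneg_right h1 h2N.le
      _ = i * 2 ^ (N + d) := by rw [hpow]; ring

lemma dyadicI_inj {N M : ℕ} {j i : ℤ} (h : dyadicI N j = dyadicI M i) : N = M ∧ j = i := by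
  have h1 := left_mem_dyadicI N j
  have h2 := left_mem_dyadicI M i
  have h3 := right_mem_dyadicI N j
  have h4 := right_mem_dyadicI M i
  rw [h, mem_dyadicI] at h1 h3
  rw [← h, mem_dyadicI] at h2 h4
  have hl : (j - 1) * 2 ^ N = (i - 1) * 2 ^ M := by linarith [h1.1, h2.1]
  have hr : j * 2 ^ N = i * 2 ^ M := by linarith [h3.2, h4.2]
  have e1 : j * 2 ^ N - (j - 1) * 2 ^ N = 2 ^ N := by ring
  have e2 : i * 2 ^ M - (i - 1) * 2 ^ M = 2 ^ M := by ring
  have hpw : (2:ℤ) ^ N = 2 ^ M := by linarith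
  have hpwn : (2:ℕ) ^ N = 2 ^ M := by exact_mod_cast hpw
  have hNM : N = M := Nat.pow_right_injective (le_refl 2) hpwn
  subst hNM
  refine ⟨rfl, ?_⟩
  have := two_pow_pos N
  exact mul_right_cancel₀ (by linarith) hr

lemma exists_mem_dyadicI (N : ℕ) (x : ℤ) : ∃ j, x ∈ dyadicI N j := by
  have h := two_pow_pos N
  have h1 := Int.emod_nonneg (x - 1) h.ne'
  have h2 := Int.emod_lt_of_pos (x - 1) h
  have h3 := Int.mul_ediv_add_emod (x - 1) (2 ^ N)
  refine ⟨(x - 1) / 2 ^ N + 1, mem_dyadicI.2 ⟨?_, ?_⟩⟩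
  · have e : ((x - 1) / 2 ^ N + 1 - 1) * 2 ^ N = 2 ^ N * ((x - 1) / 2 ^ N) := by ring
    rw [e]; linarith
  · have e : ((x - 1) / 2 ^ N + 1) * 2 ^ N = 2 ^ N * ((x - 1) / 2 ^ N) + 2 ^ N := by ring
    rw [e]; linarith



noncomputable def avgE (a : ℤ → ℝ) (N : ℕ) (j : ℤ) : ℝ≥0∞ :=
  (∑ k ∈ dyadicI N j, ENNReal.ofReal |a k|) / ((2 ^ N : ℕ) : ℝ≥0∞)

lemma avgE_le_Md {a : ℤ → ℝ} {N : ℕ} (hN : 0 < N) {j k : ℤ} (hk : k ∈ dyadicI N j) :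
    avgE a N j ≤ Md a k := by
  rw [Md]
  refine le_iSup_of_le (dyadicI N j) ?_
  refine le_iSup_of_le ⟨N, hN, j, rfl⟩ ?_
  refine le_iSup_of_le hk ?_
  rw [avgE, card_dyadicI]

noncomputable def Wop (a : ℤ → ℝ) (m : ℤ) : ℝ≥0∞ :=
  ⨆ (N : ℕ) (_ : 0 < N) (j : ℤ) (_ : m ∈ dyadicI N j) (i : ℤ)
    (_ : i ∈ Finset.Icc (j - 1) (j + 1)), avgE a N i

lemma avgE_le_Wop {a : ℤ → ℝ} {m : ℤ} {N : ℕ} (hN : 0 < N) {j i : ℤ} (hm : m ∈ dyadicI N j)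
    (hi : i ∈ Finset.Icc (j - 1) (j + 1)) : avgE a N i ≤ Wop a m := by
  rw [Wop]
  exact le_iSup_of_le N (le_iSup_of_le hN (le_iSup_of_le j (le_iSup_of_le hm
    (le_iSup_of_le i (le_iSup_of_le hi (le_refl _))))))

lemma sum_dyadic_le {a : ℤ → ℝ} {m : ℤ} {N : ℕ} (hN : 0 < N) {j i : ℤ} (hm : m ∈ dyadicI N j)
    (hi : i ∈ Finset.Icc (j - 1) (j + 1)) :
    ∑ k ∈ dyadicI N i, ENNReal.ofReal |a k| ≤ Wop a m * ((2 ^ N : ℕ) : ℝ≥0∞) := by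
  have h := avgE_le_Wop (a := a) (m := m) hN hm hi
  rw [avgE, ENNReal.div_le_iff (by positivity) (by simp)] at h
  exact h

lemma Mc_le_Wop (a : ℤ → ℝ) (m : ℤ) : Mc a m ≤ 4 * Wop a m := by
  rw [Mc]
  refine iSup_le fun r => iSup_le fun hr => ?_
  have hsum : ∑ n ∈ Finset.Icc (-(r:ℤ)) (r:ℤ), ENNReal.ofReal |a (m - n)|
      = ∑ k ∈ Finset.Icc (m - (r:ℤ)) (m + (r:ℤ)), ENNReal.ofReal |a k| := by
    apply Finset.sum_nbij' (i := fun n => m - n) (j := fun k => m - k)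
    · intro x hx; rw [Finset.mem_Icc] at hx ⊢; omega
    · intro x hx; rw [Finset.mem_Icc] at hx ⊢; omega
    · intro x _; omega
    · intro x _; omega
    · intro x _; rfl
  rw [hsum]
  set q : ℕ := Nat.clog 2 (2 * r + 1) with hqdef
  have hq1 : 2 * r + 1 ≤ 2 ^ q := Nat.le_pow_clog one_lt_two _
  have hlt : 1 < 2 * r + 1 := by omega
  have hq0 : 0 < q := by
    rcases Nat.eq_zero_or_pos q with h | h
    · rw [h] at hq1; simp at hq1; omega
    · exact h
  have hq2 : 2 ^ q ≤ 4 * r := by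
    have h := Nat.pow_pred_clog_lt_self one_lt_two hlt
    rw [← hqdef] at h
    have h' : 2 ^ (q - 1) ≤ 2 * r := Nat.lt_succ_iff.mp h
    have e : 2 ^ q = 2 * 2 ^ (q - 1) := by
      conv_lhs => rw [← Nat.succ_pred_eq_of_pos hq0]
      rw [pow_succ, Nat.pred_eq_sub_one]; ring
    calc 2 ^ q = 2 * 2 ^ (q - 1) := e
      _ ≤ 2 * (2 * r) := Nat.mul_le_mul_left 2 h'
      _ = 4 * r := by ring
  obtain ⟨k, hk⟩ := exists_mem_dyadicI q (m - (r:ℤ))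
  have hcast : ((2:ℤ)) ^ q = ((2 ^ q : ℕ) : ℤ) := by push_cast; ring
  have hle : (2 * (r:ℤ) + 1) ≤ 2 ^ q := by
    rw [hcast]; exact_mod_cast hq1
  have hsubJ : Finset.Icc (m - (r:ℤ)) (m + (r:ℤ)) ⊆ dyadicI q k ∪ dyadicI q (k + 1) := by
    intro x hx
    rw [Finset.mem_Icc] at hx
    have hk' := mem_dyadicI.1 hk
    rw [Finset.mem_union, mem_dyadicI, mem_dyadicI]
    have e : (k + 1) * 2 ^ q = k * 2 ^ q + 2 ^ q := by ring
    have e2 : (k + 1 - 1) * 2 ^ q = k * 2 ^ q := by ring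
    by_cases hsplit : x ≤ k * 2 ^ q
    · exact Or.inl ⟨by linarith [hk'.1], hsplit⟩
    · refine Or.inr ⟨by rw [e2]; linarith, ?_⟩
      rw [e]; linarith [hk'.2]
  have hmJ : m ∈ Finset.Icc (m - (r:ℤ)) (m + (r:ℤ)) := by
    rw [Finset.mem_Icc]; omega
  have hWb : ∑ x ∈ dyadicI q k, ENNReal.ofReal |a x| ≤ Wop a m * ((2 ^ q : ℕ) : ℝ≥0∞) ∧
      ∑ x ∈ dyadicI q (k+1), ENNReal.ofReal |a x| ≤ Wop a m * ((2 ^ q : ℕ) : ℝ≥0∞) := by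
    rcases Finset.mem_union.1 (hsubJ hmJ) with hmk | hmk
    · constructor
      · exact sum_dyadic_le hq0 hmk (by rw [Finset.mem_Icc]; omega)
      · exact sum_dyadic_le hq0 hmk (by rw [Finset.mem_Icc]; omega)
    · constructor
      · exact sum_dyadic_le hq0 hmk (by rw [Finset.mem_Icc]; omega)
      · exact sum_dyadic_le hq0 hmk (by rw [Finset.mem_Icc]; omega)
  have hsplit2 : ∑ x ∈ Finset.Icc (m - (r:ℤ)) (m + (r:ℤ)), ENNReal.ofReal |a x|
      ≤ Wop a m * (2 * ((2 ^ q : ℕ) : ℝ≥0∞)) := by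
    calc ∑ x ∈ Finset.Icc (m - (r:ℤ)) (m + (r:ℤ)), ENNReal.ofReal |a x|
        ≤ ∑ x ∈ dyadicI q k ∪ dyadicI q (k + 1), ENNReal.ofReal |a x| :=
          Finset.sum_le_sum_of_subset hsubJ
      _ ≤ (∑ x ∈ dyadicI q k ∪ dyadicI q (k + 1), ENNReal.ofReal |a x|)
            + ∑ x ∈ dyadicI q k ∩ dyadicI q (k + 1), ENNReal.ofReal |a x| := le_self_add
      _ = (∑ x ∈ dyadicI q k, ENNReal.ofReal |a x|)
            + ∑ x ∈ dyadicI q (k + 1), ENNReal.ofReal |a x| := Finset.sum_union_inter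
      _ ≤ Wop a m * ((2 ^ q : ℕ) : ℝ≥0∞) + Wop a m * ((2 ^ q : ℕ) : ℝ≥0∞) :=
          add_le_add hWb.1 hWb.2
      _ = Wop a m * (2 * ((2 ^ q : ℕ) : ℝ≥0∞)) := by ring
  rw [ENNReal.div_le_iff (mul_ne_zero two_ne_zero (Nat.cast_ne_zero.2 hr.ne'))
    (ENNReal.mul_ne_top (by norm_num) (ENNReal.natCast_ne_top r))]
  have hcle : (2 * ((2 ^ q : ℕ) : ℝ≥0∞)) ≤ 8 * (r : ℝ≥0∞) := by
    have hn : (2 * 2 ^ q : ℕ) ≤ 8 * r := by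
      calc 2 * 2 ^ q ≤ 2 * (4 * r) := Nat.mul_le_mul_left 2 hq2
        _ = 8 * r := by ring
    calc (2:ℝ≥0∞) * ((2 ^ q : ℕ) : ℝ≥0∞) = ((2 * 2 ^ q : ℕ) : ℝ≥0∞) := by push_cast; ring
      _ ≤ ((8 * r : ℕ) : ℝ≥0∞) := by exact_mod_cast hn
      _ = 8 * (r : ℝ≥0∞) := by push_cast; ring
  calc ∑ x ∈ Finset.Icc (m - (r:ℤ)) (m + (r:ℤ)), ENNReal.ofReal |a x|
      ≤ Wop a m * (2 * ((2 ^ q : ℕ) : ℝ≥0∞)) := hsplit2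
    _ ≤ Wop a m * (8 * (r : ℝ≥0∞)) := mul_le_mul_right hcle _
    _ = 4 * Wop a m * (2 * (r:ℝ≥0∞)) := by ring



lemma Md_ne_top {a : ℤ → ℝ} {p : ℝ} (hp : 0 < p) (hMd : (∑' m : ℤ, Md a m ^ p) ≠ ⊤)
    (m : ℤ) : Md a m ≠ ⊤ := by
  intro h
  apply hMd
  refine top_unique ?_
  calc (⊤:ℝ≥0∞) = Md a m ^ p := by rw [h, ENNReal.top_rpow_of_pos hp]
    _ ≤ ∑' m : ℤ, Md a m ^ p := ENNReal.le_tsum m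

lemma Wop_le {a : ℤ → ℝ} {p : ℝ} (hp : 0 < p) (m : ℤ) :
    Wop a m ≤ (∑' m : ℤ, Md a m ^ p) ^ (1/p) := by
  rw [Wop]
  refine iSup_le fun N => iSup_le fun hN => iSup_le fun j => iSup_le fun _ =>
    iSup_le fun i => iSup_le fun _ => ?_
  calc avgE a N i ≤ Md a (i * 2 ^ N) := avgE_le_Md hN (right_mem_dyadicI N i)
    _ = (Md a (i * 2 ^ N) ^ p) ^ (1/p) := by
        rw [← ENNReal.rpow_mul, mul_one_div, div_self hp.ne', ENNReal.rpow_one]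
    _ ≤ (∑' m : ℤ, Md a m ^ p) ^ (1/p) :=
        ENNReal.rpow_le_rpow (ENNReal.le_tsum _) (by positivity)

lemma Wop_ne_top {a : ℤ → ℝ} {p : ℝ} (hp : 0 < p) (hMd : (∑' m : ℤ, Md a m ^ p) ≠ ⊤)
    (m : ℤ) : Wop a m ≠ ⊤ :=
  ne_top_of_le_ne_top (ENNReal.rpow_ne_top_of_nonneg (by positivity) hMd) (Wop_le hp m)


def Om (a : ℤ → ℝ) (t : ℝ≥0∞) : Set ℤ := {m : ℤ | t < Md a m}

def Sgood (a : ℤ → ℝ) (t : ℝ≥0∞) : Set (ℕ × ℤ) :=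
  {q : ℕ × ℤ | 0 < q.1 ∧ ↑(dyadicI q.1 q.2) ⊆ Om a t ∧
    ∀ (M' : ℕ) (j' : ℤ), 0 < M' → dyadicI q.1 q.2 ⊆ dyadicI M' j' → ↑(dyadicI M' j') ⊆ Om a t →
      dyadicI M' j' = dyadicI q.1 q.2}

noncomputable def bigI (q : ℕ × ℤ) : Finset ℤ := Finset.Icc ((q.2 - 2) * 2 ^ q.1 + 1) ((q.2 + 1) * 2 ^ q.1)

lemma Om_finite {a : ℤ → ℝ} {p : ℝ} (hp : 0 < p) (hMd : (∑' m : ℤ, Md a m ^ p) ≠ ⊤)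
    {t : ℝ≥0∞} (ht : 0 < t) (ht' : t ≠ ⊤) : (Om a t).Finite := by
  refine Set.Finite.subset (ENNReal.finite_const_le_of_tsum_ne_top hMd
    (show t ^ p ≠ 0 from (ENNReal.rpow_pos ht ht').ne')) ?_
  intro m hm
  exact ENNReal.rpow_le_rpow (le_of_lt hm) hp.le

lemma level_bound {a : ℤ → ℝ} {t : ℝ≥0∞} (hfin : (Om a t).Finite)
    (M : ℕ) (i : ℤ) (hsub : ↑(dyadicI M i) ⊆ Om a t) : M ≤ hfin.toFinset.card := by
  have h1 : (dyadicI M i).card ≤ hfin.toFinset.card := by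
    apply Finset.card_le_card
    intro x hx
    rw [Set.Finite.mem_toFinset]
    exact hsub hx
  rw [card_dyadicI] at h1
  have h2 : M < 2 ^ M := Nat.lt_two_pow_self
  omega

lemma exists_maximal {a : ℤ → ℝ} {t : ℝ≥0∞} (hfin : (Om a t).Finite)
    (N : ℕ) (i : ℤ) (hN : 0 < N) (hsub : ↑(dyadicI N i) ⊆ Om a t) :
    ∃ q ∈ Sgood a t, dyadicI N i ⊆ dyadicI q.1 q.2 := by
  classical
  set n := hfin.toFinset.card with hndef
  set P : ℕ → Prop := fun M => ∃ j : ℤ, 0 < M ∧ dyadicI N i ⊆ dyadicI M j ∧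
    ↑(dyadicI M j) ⊆ Om a t with hPdef
  have hPN : P N := ⟨i, hN, subset_rfl, hsub⟩
  have hNn : N ≤ n := level_bound hfin N i hsub
  obtain ⟨j, hM0, hKQ, hQΩ⟩ : P (Nat.findGreatest P n) := Nat.findGreatest_spec hNn hPN
  refine ⟨(Nat.findGreatest P n, j), ⟨hM0, hQΩ, ?_⟩, hKQ⟩
  intro M' j' hM' hQQ' hQ'Ω
  have hPM' : P M' := ⟨j', hM', hKQ.trans hQQ', hQ'Ω⟩
  have hM'le : M' ≤ Nat.findGreatest P n := by
    by_contra hcon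
    exact Nat.findGreatest_is_greatest (lt_of_not_ge hcon) (level_bound hfin M' j' hQ'Ω) hPM'
  obtain ⟨x, hxQ⟩ := dyadicI_nonempty (Nat.findGreatest P n) j
  exact subset_antisymm (dyadicI_subset hM'le (hQQ' hxQ) hxQ) hQQ'

lemma mem_bigI {m : ℤ} {N M : ℕ} {j i j' : ℤ} (hmj : m ∈ dyadicI N j)
    (hij : i ∈ Finset.Icc (j - 1) (j + 1)) (hKQ : dyadicI N i ⊆ dyadicI M j') :
    m ∈ bigI (M, j') := by
  rw [bigI, Finset.mem_Icc]
  have hNM : N ≤ M := by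
    have hc := Finset.card_le_card hKQ
    rw [card_dyadicI, card_dyadicI] at hc
    exact (Nat.pow_le_pow_iff_right one_lt_two).1 hc
  have h2NM : (2:ℤ) ^ N ≤ 2 ^ M := pow_le_pow_right₀ (by norm_num) hNM
  have hmem1 := mem_dyadicI.1 (hKQ (left_mem_dyadicI N i))
  have hmem2 := mem_dyadicI.1 (hKQ (right_mem_dyadicI N i))
  have hmj' := mem_dyadicI.1 hmj
  rw [Finset.mem_Icc] at hij
  have h2N := two_pow_pos N
  have h2M := two_pow_pos M
  have c1 : (j' - 1) * 2 ^ M ≤ (i - 1) * 2 ^ N := by linarith [hmem1.1]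
  constructor
  · have e1 : (j' - 2) * 2 ^ M = (j' - 1) * 2 ^ M - 2 ^ M := by ring
    have e2 : (i - 2) * 2 ^ N = (i - 1) * 2 ^ N - 2 ^ N := by ring
    have c2 : (i - 2) * 2 ^ N ≤ (j - 1) * 2 ^ N :=
      mul_le_mul_of_nonneg_right (by omega) h2N.le
    linarith [hmj'.1]
  · have e3 : (i + 1) * 2 ^ N = i * 2 ^ N + 2 ^ N := by ring
    have e4 : (j' + 1) * 2 ^ M = j' * 2 ^ M + 2 ^ M := by ring
    have c3 : j * 2 ^ N ≤ (i + 1) * 2 ^ N :=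
      mul_le_mul_of_nonneg_right (by omega) h2N.le
    linarith [hmj'.2, hmem2.2]

lemma cover_lemma {a : ℤ → ℝ} {t : ℝ≥0∞} (hfin : (Om a t).Finite) :
    {m : ℤ | t < Wop a m} ⊆ ⋃ q ∈ Sgood a t, (↑(bigI q) : Set ℤ) := by
  intro m hm
  simp only [Set.mem_setOf_eq] at hm
  rw [Wop] at hm
  obtain ⟨N, hm⟩ := lt_iSup_iff.1 hm
  obtain ⟨hN, hm⟩ := lt_iSup_iff.1 hm
  obtain ⟨j, hm⟩ := lt_iSup_iff.1 hm
  obtain ⟨hmj, hm⟩ := lt_iSup_iff.1 hm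
  obtain ⟨i, hm⟩ := lt_iSup_iff.1 hm
  obtain ⟨hij, havg⟩ := lt_iSup_iff.1 hm
  have hsubΩ : ↑(dyadicI N i) ⊆ Om a t := by
    intro k hk
    exact lt_of_lt_of_le havg (avgE_le_Md hN (Finset.mem_coe.1 hk))
  obtain ⟨q, hqS, hKQ⟩ := exists_maximal hfin N i hN hsubΩ
  refine Set.mem_biUnion hqS ?_
  have : m ∈ bigI (q.1, q.2) := mem_bigI hmj hij hKQ
  simpa using this

lemma disj_lemma {a : ℤ → ℝ} {t : ℝ≥0∞} :
    (Sgood a t).PairwiseDisjoint (fun q : ℕ × ℤ => (↑(dyadicI q.1 q.2) : Set ℤ)) := by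
  intro q hq q' hq' hne
  rw [Function.onFun, Set.disjoint_left]
  intro x hx hx'
  rcases le_total q.1 q'.1 with hle | hle
  · have hsub := dyadicI_subset hle (Finset.mem_coe.1 hx) (Finset.mem_coe.1 hx')
    have heq := hq.2.2 q'.1 q'.2 hq'.1 hsub hq'.2.1
    obtain ⟨h1, h2⟩ := dyadicI_inj heq
    exact hne (Prod.ext h1 h2).symm
  · have hsub := dyadicI_subset hle (Finset.mem_coe.1 hx') (Finset.mem_coe.1 hx)
    have heq := hq'.2.2 q.1 q.2 hq.1 hsub hq.2.1
    obtain ⟨h1, h2⟩ := dyadicI_inj heq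
    exact hne (Prod.ext h1 h2)

lemma count_bigI (q : ℕ × ℤ) :
    Measure.count (↑(bigI q) : Set ℤ) = 3 * Measure.count (↑(dyadicI q.1 q.2) : Set ℤ) := by
  rw [Measure.count_apply_finset, Measure.count_apply_finset]
  have hc1 : (bigI q).card = 3 * 2 ^ q.1 := by
    rw [bigI, Int.card_Icc]
    have h : (q.2 + 1) * 2 ^ q.1 + 1 - ((q.2 - 2) * 2 ^ q.1 + 1)
        = ((3 * 2 ^ q.1 : ℕ) : ℤ) := by push_cast; ring
    rw [h, Int.toNat_natCast]
  rw [hc1, card_dyadicI]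
  push_cast
  ring

set_option maxHeartbeats 1000000 in
lemma count_Wop_le (a : ℤ → ℝ) {p : ℝ} (hp : 0 < p) (hMd : (∑' m : ℤ, Md a m ^ p) ≠ ⊤)
    {t : ℝ≥0∞} (ht : 0 < t) (ht' : t ≠ ⊤) :
    Measure.count {m : ℤ | t < Wop a m} ≤ 3 * Measure.count {m : ℤ | t < Md a m} := by
  have hfin := Om_finite hp hMd ht ht'
  calc Measure.count {m : ℤ | t < Wop a m}
      ≤ Measure.count (⋃ q ∈ Sgood a t, (↑(bigI q) : Set ℤ)) :=
        measure_mono (cover_lemma hfin)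
    _ ≤ ∑' q : Sgood a t, Measure.count (↑(bigI (q : ℕ × ℤ)) : Set ℤ) :=
        measure_biUnion_le _ (Set.to_countable _) _
    _ = ∑' q : Sgood a t, 3 * Measure.count (↑(dyadicI (q : ℕ × ℤ).1 (q : ℕ × ℤ).2) : Set ℤ) :=
        tsum_congr fun q => count_bigI q
    _ = 3 * ∑' q : Sgood a t, Measure.count (↑(dyadicI (q : ℕ × ℤ).1 (q : ℕ × ℤ).2) : Set ℤ) :=
        ENNReal.tsum_mul_left
    _ = 3 * Measure.count (⋃ q ∈ Sgood a t, (↑(dyadicI q.1 q.2) : Set ℤ)) := by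
        rw [measure_biUnion (Set.to_countable _) disj_lemma
          (fun b _ => (Set.to_countable _).measurableSet)]
    _ ≤ 3 * Measure.count (Om a t) := by
        refine mul_le_mul_right (measure_mono ?_) _
        exact Set.iUnion₂_subset fun q hq => hq.2.1


lemma layercake {f : ℤ → ℝ≥0∞} (hf : ∀ m, f m ≠ ⊤) {p : ℝ} (hp : 0 < p) :
    ∑' m : ℤ, f m ^ p = ENNReal.ofReal p *
      ∫⁻ t in Set.Ioi (0:ℝ), Measure.count {m : ℤ | t < (f m).toReal}
        * ENNReal.ofReal (t ^ (p - 1)) := by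
  rw [← MeasureTheory.lintegral_rpow_eq_lintegral_meas_lt_mul Measure.count
    (Filter.Eventually.of_forall fun m => ENNReal.toReal_nonneg)
    (measurable_of_countable _).aemeasurable hp]
  rw [lintegral_count]
  refine tsum_congr fun m => ?_
  rw [← ENNReal.ofReal_rpow_of_nonneg ENNReal.toReal_nonneg hp.le,
    ENNReal.ofReal_toReal (hf m)]


end Stmt3Aux

/-- `‖M′a‖_{ℓᵖ}ᵖ ≤ 3·4ᵖ ‖M_d a‖_{ℓᵖ}ᵖ` whenever `M_d a ∈ ℓᵖ(ℤ)`, `1 < p < ∞`. -/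


theorem statement3 (p : ℝ) (hp1 : 1 < p) (a : ℤ → ℝ)
    (hMd : (∑' m : ℤ, Md a m ^ p) ≠ ⊤) :
    ∑' m : ℤ, Mc a m ^ p ≤ 3 * (4 : ℝ≥0∞) ^ p * ∑' m : ℤ, Md a m ^ p := by
  have hp : 0 < p := lt_trans one_pos hp1
  have hMdt : ∀ m, Md a m ≠ ⊤ := Stmt3Aux.Md_ne_top hp hMd
  have hWt : ∀ m,Stmt3Aux.Wop a m ≠ ⊤ := Stmt3Aux.Wop_ne_top hp hMd
  have hmid : ∑' m : ℤ,Stmt3Aux.Wop a m ^ p ≤ 3 * ∑' m : ℤ, Md a m ^ p := by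
    rw [Stmt3Aux.layercake hWt hp, Stmt3Aux.layercake hMdt hp]
    rw [show (3:ℝ≥0∞) * (ENNReal.ofReal p * ∫⁻ t in Set.Ioi (0:ℝ),
        Measure.count {m : ℤ | t < (Md a m).toReal} * ENNReal.ofReal (t ^ (p - 1)))
      = ENNReal.ofReal p * ∫⁻ t in Set.Ioi (0:ℝ),
        3 * (Measure.count {m : ℤ | t < (Md a m).toReal} * ENNReal.ofReal (t ^ (p - 1))) by
      rw [lintegral_const_mul' 3 _ (by norm_num)]; ring]
    refine mul_le_mul_right ?_ _
    refine lintegral_mono_ae ?_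
    filter_upwards [self_mem_ae_restrict measurableSet_Ioi] with t htpos
    have hset1 : {m : ℤ | t < (Stmt3Aux.Wop a m).toReal} = {m : ℤ | ENNReal.ofReal t <Stmt3Aux.Wop a m} := by
      ext m
      exact (ENNReal.ofReal_lt_iff_lt_toReal (le_of_lt htpos) (hWt m)).symm
    have hset2 : {m : ℤ | t < (Md a m).toReal} = {m : ℤ | ENNReal.ofReal t < Md a m} := by
      ext m
      exact (ENNReal.ofReal_lt_iff_lt_toReal (le_of_lt htpos) (hMdt m)).symm
    rw [hset1, hset2, ← mul_assoc]
    exact mul_le_mul_left (Stmt3Aux.count_Wop_le a hp hMd (ENNReal.ofReal_pos.2 htpos)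
      ENNReal.ofReal_ne_top) _
  calc ∑' m : ℤ, Mc a m ^ p
      ≤ ∑' m : ℤ, (4 *Stmt3Aux.Wop a m) ^ p :=
        Summable.tsum_le_tsum (fun m => ENNReal.rpow_le_rpow (Stmt3Aux.Mc_le_Wop a m) hp.le)
          ENNReal.summable ENNReal.summable
    _ = 4 ^ p * ∑' m : ℤ,Stmt3Aux.Wop a m ^ p := by
        simp_rw [ENNReal.mul_rpow_of_nonneg _ _ hp.le]
        rw [ENNReal.tsum_mul_left]
    _ ≤ 4 ^ p * (3 * ∑' m : ℤ, Md a m ^ p) := mul_le_mul_right hmid _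
    _ = 3 * (4:ℝ≥0∞) ^ p * ∑' m : ℤ, Md a m ^ p := by ring
end

section
/- Let 1 < p < ∞ and let a : ℤ → ℝ be a nonnegative sequence in ℓ^p(ℤ) such that Σ_{m∈ℤ} (M_d a(m))^p < ∞. Then there is a constant C depending only on p such that Σ_{m∈ℤ} (M_d a(m))^p ≤ C · Σ_{m∈ℤ} (M^# a(m))^p. -/
open scoped ENNReal
open MeasureTheory

namespace FS

/-- level-`N` index of `m` -/
def e (m : ℤ) (N : ℕ) : ℤ := (m - 1) / 2 ^ N

/-- the dyadic interval of level `N` containing `m` -/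
noncomputable def D (m : ℤ) (N : ℕ) : Finset ℤ := dyadicI N (e m N + 1)

lemma two_pow_pos (N : ℕ) : (0:ℤ) < 2 ^ N := by positivity

lemma ediv_unique {a b q : ℤ} (hb : 0 < b) (h1 : q * b ≤ a) (h2 : a < (q+1) * b) :
    a / b = q := by
  have h3 : b * (a / b) + a % b = a := Int.mul_ediv_add_emod a b
  have h4 : 0 ≤ a % b := Int.emod_nonneg a hb.ne'
  have h5 : a % b < b := Int.emod_lt_of_pos a hb
  set d := a / b with hd
  have hqd : q ≤ d := by nlinarith
  have hdq : d ≤ q := by nlinarith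
  omega

lemma mem_dyadicI {N : ℕ} {j m : ℤ} :
    m ∈ dyadicI N j ↔ (j - 1) * 2 ^ N < m ∧ m ≤ j * 2 ^ N := by
  simp [dyadicI, Int.add_one_le_iff]

lemma card_dyadicI (N : ℕ) (j : ℤ) : (dyadicI N j).card = 2 ^ N := by
  rw [dyadicI, Int.card_Icc]
  have h2 : (j * 2 ^ N) + 1 - ((j - 1) * 2 ^ N + 1) = 2 ^ N := by ring
  rw [h2, show ((2:ℤ)^N) = ((2^N:ℕ):ℤ) by push_cast; ring, Int.toNat_natCast]

lemma mem_dyadicI_iff_e {N : ℕ} {j m : ℤ} :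
    m ∈ dyadicI N j ↔ e m N = j - 1 := by
  rw [mem_dyadicI]
  constructor
  · rintro ⟨h1, h2⟩
    exact ediv_unique (two_pow_pos N) (by linarith) (by linarith [h2]; )
  · intro h
    have h3 : (2:ℤ) ^ N * ((m-1) / 2 ^ N) + (m-1) % 2 ^ N = m - 1 := Int.mul_ediv_add_emod _ _
    have h4 : 0 ≤ (m-1) % 2 ^ N := Int.emod_nonneg _ (two_pow_pos N).ne'
    have h5 : (m-1) % 2 ^ N < 2 ^ N := Int.emod_lt_of_pos _ (two_pow_pos N)
    rw [e] at h
    constructor <;> nlinarith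

lemma mem_D (m : ℤ) (N : ℕ) : m ∈ D m N := by
  rw [D, mem_dyadicI_iff_e]; ring

lemma mem_D_iff {k m : ℤ} {N : ℕ} : k ∈ D m N ↔ e k N = e m N := by
  rw [D, mem_dyadicI_iff_e]; constructor <;> intro h <;> omega

lemma card_D (m : ℤ) (N : ℕ) : (D m N).card = 2 ^ N := card_dyadicI _ _

lemma dyadic_eq_D {N : ℕ} {j m : ℤ} (h : m ∈ dyadicI N j) : dyadicI N j = D m N := by
  rw [mem_dyadicI_iff_e] at h
  have hj : j = e m N + 1 := by omega
  rw [D, hj]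

lemma ediv_ediv' {a b c : ℤ} (hb : 0 < b) (hc : 0 < c) : a / (b * c) = a / b / c := by
  have h3 : b * (a / b) + a % b = a := Int.mul_ediv_add_emod a b
  have h4 : 0 ≤ a % b := Int.emod_nonneg a hb.ne'
  have h5 : a % b < b := Int.emod_lt_of_pos a hb
  set d := a / b with hd
  have h6 : c * (d / c) + d % c = d := Int.mul_ediv_add_emod d c
  have h7 : 0 ≤ d % c := Int.emod_nonneg d hc.ne'
  have h8 : d % c < c := Int.emod_lt_of_pos d hc
  set q := d / c with hq
  refine ediv_unique (by positivity) ?_ ?_ <;> nlinarith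

lemma e_e {m : ℤ} {N M : ℕ} (h : N ≤ M) : e m M = (e m N) / 2 ^ (M - N) := by
  rw [e, e]
  have : (2:ℤ) ^ M = 2 ^ N * 2 ^ (M - N) := by
    rw [← pow_add]; congr 1; omega
  rw [this, ediv_ediv' (two_pow_pos N) (two_pow_pos _)]

lemma e_congr {k m : ℤ} {N M : ℕ} (hNM : N ≤ M) (h : e k N = e m N) : e k M = e m M := by
  rw [e_e hNM, e_e hNM, h]

lemma D_mono {m : ℤ} {N M : ℕ} (h : N ≤ M) : D m N ⊆ D m M := by
  intro k hk
  rw [mem_D_iff] at hk ⊢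
  exact e_congr h hk

lemma D_congr {k m : ℤ} {N M : ℕ} (hNM : N ≤ M) (h : k ∈ D m N) : D k M = D m M := by
  rw [mem_D_iff] at h
  rw [D, D, e_congr hNM h]

lemma D_isDyadic (m : ℤ) (N : ℕ) (hN : 0 < N) : IsDyadicZ (D m N) :=
  ⟨N, hN, e m N + 1, rfl⟩

lemma D_isInterval (m : ℤ) (N : ℕ) : IsIntervalZ (D m N) := by
  refine ⟨(e m N + 1 - 1) * 2 ^ N + 1, (e m N + 1) * 2 ^ N, ?_, rfl⟩
  have := two_pow_pos N
  nlinarith [two_pow_pos N]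

lemma card_D_ennreal (m : ℤ) (N : ℕ) : ((D m N).card : ℝ≥0∞) = 2 ^ N := by
  rw [card_D]; push_cast; ring

lemma lt_Md_iff {a : ℤ → ℝ} {m : ℤ} {lam : ℝ≥0∞} :
    lam < Md a m ↔ ∃ N : ℕ, 0 < N ∧ lam * 2 ^ N < ∑ k ∈ D m N, ENNReal.ofReal |a k| := by
  rw [Md]
  simp only [lt_iSup_iff]
  constructor
  · rintro ⟨I, ⟨N, hN, j, rfl⟩, hm, hlt⟩
    refine ⟨N, hN, ?_⟩
    rw [dyadic_eq_D hm, card_D_ennreal] at hlt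
    rwa [ENNReal.lt_div_iff_mul_lt (Or.inl (by positivity)) (Or.inl (by simp))] at hlt
  · rintro ⟨N, hN, hlt⟩
    refine ⟨D m N, D_isDyadic m N hN, mem_D m N, ?_⟩
    rw [card_D_ennreal]
    rwa [ENNReal.lt_div_iff_mul_lt (Or.inl (by positivity)) (Or.inl (by simp))]

lemma le_Md {a : ℤ → ℝ} {m m' : ℤ} {N : ℕ} (hN : 0 < N) (hm' : m' ∈ D m N) :
    (∑ k ∈ D m N, ENNReal.ofReal |a k|) / 2 ^ N ≤ Md a m' := by
  rw [Md]
  have h1 : (∑ k ∈ D m N, ENNReal.ofReal |a k|) / 2 ^ N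
      = (∑ k ∈ D m N, ENNReal.ofReal |a k|) / (D m N).card := by rw [card_D_ennreal]
  rw [h1]
  exact le_iSup₂_of_le (D m N) (D_isDyadic m N hN) (le_iSup_of_le hm' le_rfl)

lemma le_Msharp {a : ℤ → ℝ} {m : ℤ} {I : Finset ℤ} (hI : IsIntervalZ I) (hm : m ∈ I) :
    (∑ n ∈ I, ENNReal.ofReal |a n - avgI a I|) / I.card ≤ Msharp a m := by
  rw [Msharp]
  exact le_iSup₂_of_le I hI (le_iSup_of_le hm le_rfl)

lemma pow_two_ne_top (M : ℕ) : ((2:ℝ≥0∞) ^ M) ≠ ⊤ := by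
  exact ENNReal.pow_ne_top (by simp)

/-- The good-lambda inequality. -/
lemma goodlambda (a : ℤ → ℝ) (ha : ∀ m, 0 ≤ a m) (lam gam : ℝ≥0∞)
    (hl0 : lam ≠ 0) (hlt : lam ≠ ⊤) (N₁ : ℕ)
    (hbd : ∀ m N, N₁ < N → (∑ k ∈ D m N, ENNReal.ofReal |a k|) ≤ lam * 2 ^ N) :
    Measure.count {m : ℤ | 2 * lam < Md a m ∧ Msharp a m ≤ gam * lam}
      ≤ 2 * gam * Measure.count {m : ℤ | lam < Md a m} := by
  classical
  set b : ℤ → ℝ≥0∞ := fun n => ENNReal.ofReal |a n| with hb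
  set E : Set ℤ := {m | lam < Md a m} with hE
  set Gs : Set ℤ := {m | 2 * lam < Md a m ∧ Msharp a m ≤ gam * lam} with hGs
  have hfin : ∀ (M : ℕ), (lam * 2 ^ M) ≠ ⊤ := fun M => ENNReal.mul_ne_top hlt (pow_two_ne_top M)
  have hEof : ∀ m N, 0 < N → lam * 2 ^ N < ∑ k ∈ D m N, b k → ∀ m' ∈ D m N, m' ∈ E := by
    intro m N hN hlt' m' hm'
    refine lt_of_lt_of_le ?_ (le_Md hN hm')
    rwa [ENNReal.lt_div_iff_mul_lt (Or.inl (by positivity)) (Or.inl (by simp))]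
  set P : ℤ → ℕ → Prop := fun m N => 0 < N ∧ lam * 2 ^ N < ∑ k ∈ D m N, b k with hP
  have hPle : ∀ m N, P m N → N ≤ N₁ := by
    rintro m N ⟨h1, h2⟩
    by_contra h
    exact absurd (hbd m N (by omega)) (not_le.mpr h2)
  set Nst : ℤ → ℕ := fun m => Nat.findGreatest (P m) N₁ with hNst
  have hPNst : ∀ m ∈ E, P m (Nst m) := by
    intro m hm
    obtain ⟨N, hN, hlt'⟩ := lt_Md_iff.mp hm
    exact Nat.findGreatest_spec (hPle m N ⟨hN, hlt'⟩) ⟨hN, hlt'⟩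
  have hmax : ∀ m M, Nst m < M → (∑ k ∈ D m M, b k) ≤ lam * 2 ^ M := by
    intro m M h1
    by_cases hM : M ≤ N₁
    · have hng := Nat.findGreatest_is_greatest h1 hM
      by_contra hc
      exact hng ⟨by omega, not_le.mp hc⟩
    · exact hbd m M (by omega)
  have hconst : ∀ m ∈ E, ∀ m' ∈ D m (Nst m), m' ∈ E ∧ Nst m' = Nst m := by
    intro m hm m' hm'
    have hPm := hPNst m hm
    have hE' : m' ∈ E := hEof m _ hPm.1 hPm.2 m' hm'
    have hD' : D m' (Nst m) = D m (Nst m) := D_congr le_rfl hm'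
    have hP' : P m' (Nst m) := ⟨hPm.1, by rw [hD']; exact hPm.2⟩
    have hge : Nst m ≤ Nst m' := Nat.le_findGreatest (hPle m' _ hP') hP'
    have hle : Nst m' ≤ Nst m := by
      by_contra hlt2
      push_neg at hlt2
      have hPm' := hPNst m' hE'
      have hDD : D m' (Nst m') = D m (Nst m') := D_congr (le_of_lt hlt2) hm'
      have hPmN : P m (Nst m') := ⟨hPm'.1, by rw [← hDD]; exact hPm'.2⟩
      exact Nat.findGreatest_is_greatest hlt2 (hPle m _ hPmN) hPmN
    exact ⟨hE', le_antisymm hle hge⟩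
  set Im : ℤ → Finset ℤ := fun m => D m (Nst m) with hIm
  have hImconst : ∀ m ∈ E, ∀ m' ∈ Im m, m' ∈ E ∧ Im m' = Im m := by
    intro m hm m' hm'
    obtain ⟨hE', hNeq⟩ := hconst m hm m' hm'
    refine ⟨hE', ?_⟩
    show D m' (Nst m') = D m (Nst m)
    rw [hNeq]
    exact D_congr le_rfl hm'
  -- local estimate on each maximal interval
  have hlocal : ∀ m ∈ E, Measure.count (Gs ∩ ↑(Im m))
      ≤ 2 * gam * Measure.count (↑(Im m) : Set ℤ) := by
    intro m hmE
    rcases (Gs ∩ ↑(Im m)).eq_empty_or_nonempty with he | ⟨m₀, hm₀⟩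
    · simp [he]
    set N := Nst m with hN
    have hNpos : 0 < N := (hPNst m hmE).1
    set Phat := D m (N+1) with hPhat
    have hIsub : Im m ⊆ Phat := D_mono (Nat.le_succ N)
    have hPhatbd : (∑ k ∈ Phat, b k) ≤ lam * 2 ^ (N+1) := hmax m (N+1) (by omega)
    set c := avgI a Phat with hc
    have hc0 : 0 ≤ c := by
      rw [hc, avgI]
      apply div_nonneg (Finset.sum_nonneg fun i _ => ha i) (Nat.cast_nonneg _)
    have hsum_eq : (∑ k ∈ Phat, b k) = ENNReal.ofReal (∑ k ∈ Phat, a k) := by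
      rw [ENNReal.ofReal_sum_of_nonneg (fun i _ => ha i)]
      exact Finset.sum_congr rfl (fun i _ => congrArg ENNReal.ofReal (abs_of_nonneg (ha i)))
    have hcle : ENNReal.ofReal c ≤ lam := by
      have hcard : ((Phat.card : ℝ)) = 2 ^ (N+1) := by
        rw [hPhat, card_D]; push_cast; ring
      rw [hc, avgI, hcard]
      rw [ENNReal.ofReal_div_of_pos (by positivity)]
      have h2 : ENNReal.ofReal ((2:ℝ) ^ (N+1)) = 2 ^ (N+1) := by
        rw [ENNReal.ofReal_pow (by norm_num)]
        norm_num
      rw [h2, ENNReal.div_le_iff_le_mul (Or.inl (by positivity)) (Or.inl (pow_two_ne_top _))]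
      rw [← hsum_eq]
      rw [mul_comm] at hPhatbd ⊢
      exact hPhatbd
    set b' : ℤ → ℝ≥0∞ := fun n => ENNReal.ofReal |a n - c| with hb'
    have hbb' : ∀ n, b n ≤ b' n + ENNReal.ofReal c := by
      intro n
      rw [hb, hb']
      dsimp only
      rw [← ENNReal.ofReal_add (abs_nonneg _) hc0]
      apply ENNReal.ofReal_le_ofReal
      rcases abs_cases (a n - c) with ⟨h1, h2⟩ | ⟨h1, h2⟩ <;>
        rw [abs_of_nonneg (ha n)] <;> linarith
    have hclaim1 : ∀ m' ∈ Gs ∩ ↑(Im m),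
        ∃ M, (0 < M ∧ M ≤ N) ∧ lam * 2 ^ M < ∑ k ∈ D m' M, b' k := by
      intro m' hm'
      obtain ⟨hm'G, hm'I⟩ := hm'
      obtain ⟨M, hM, hlt2⟩ := lt_Md_iff.mp hm'G.1
      have hm'DN : m' ∈ D m N := hm'I
      have hMN : M ≤ N := by
        by_contra h
        push_neg at h
        have hDx : D m' M = D m M := D_congr (le_of_lt h) hm'DN
        have hub := hmax m M (by omega)
        rw [hDx] at hlt2
        have h2 : lam * 2 ^ M ≤ 2 * lam * 2 ^ M := by
          apply mul_le_mul_left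
          calc lam = 1 * lam := (one_mul lam).symm
          _ ≤ 2 * lam := mul_le_mul_left one_le_two lam
        exact absurd (lt_of_lt_of_le hlt2 (hub.trans h2)) (lt_irrefl _)
      refine ⟨M, ⟨hM, hMN⟩, ?_⟩
      have hsb : (∑ k ∈ D m' M, b k) ≤ (∑ k ∈ D m' M, b' k) + lam * 2 ^ M := by
        calc (∑ k ∈ D m' M, b k) ≤ ∑ k ∈ D m' M, (b' k + ENNReal.ofReal c) :=
              Finset.sum_le_sum (fun i _ => hbb' i)
        _ = (∑ k ∈ D m' M, b' k) + (D m' M).card * ENNReal.ofReal c := by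
              rw [Finset.sum_add_distrib, Finset.sum_const, nsmul_eq_mul]
        _ ≤ (∑ k ∈ D m' M, b' k) + 2 ^ M * lam := by
              apply add_le_add_right
              rw [card_D_ennreal]
              exact mul_le_mul_right hcle _
        _ = (∑ k ∈ D m' M, b' k) + lam * 2 ^ M := by rw [mul_comm]
      have h2 : (2:ℝ≥0∞) * lam * 2 ^ M = lam * 2 ^ M + lam * 2 ^ M := by ring
      have h3 : lam * 2 ^ M + lam * 2 ^ M < (∑ k ∈ D m' M, b' k) + lam * 2 ^ M := by
        rw [← h2]; exact lt_of_lt_of_le hlt2 hsb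
      exact (ENNReal.add_lt_add_iff_right (hfin M)).mp h3
    set Q : ℤ → ℕ → Prop := fun x M => (0 < M ∧ M ≤ N) ∧ lam * 2 ^ M < ∑ k ∈ D x M, b' k
      with hQ
    set Mst : ℤ → ℕ := fun x => Nat.findGreatest (Q x) N with hMst
    have hQspec : ∀ m' ∈ Gs ∩ ↑(Im m), Q m' (Mst m') := by
      intro m' hm'
      obtain ⟨M, hM, hlt2⟩ := hclaim1 m' hm'
      exact Nat.findGreatest_spec hM.2 ⟨hM, hlt2⟩
    have hMstle : ∀ x, Mst x ≤ N := fun x => Nat.findGreatest_le N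
    have hJconst : ∀ m', Q m' (Mst m') → ∀ x ∈ D m' (Mst m'), Mst x = Mst m' := by
      intro m' hQm' x hx
      have hq' : Q x (Mst m') := ⟨hQm'.1, by rw [D_congr le_rfl hx]; exact hQm'.2⟩
      have hge : Mst m' ≤ Mst x := Nat.le_findGreatest hQm'.1.2 hq'
      have hle : Mst x ≤ Mst m' := by
        by_contra hl
        push_neg at hl
        have hspec : Q x (Mst x) := Nat.findGreatest_spec hQm'.1.2 hq'
        have hDD : D x (Mst x) = D m' (Mst x) := D_congr (le_of_lt hl) hx
        exact Nat.findGreatest_is_greatest hl hspec.1.2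
          ⟨hspec.1, by rw [← hDD]; exact hspec.2⟩
      omega
    set Tf : Finset ℤ := (Im m).filter (fun x => x ∈ Gs) with hTf
    have hTfset : (Gs ∩ ↑(Im m)) = ↑Tf := by
      ext x
      simp only [hTf, Finset.coe_filter, Set.mem_setOf_eq, Set.mem_inter_iff,
        Finset.mem_coe]
      tauto
    set Jf : ℤ → Finset ℤ := fun x => D x (Mst x) with hJf
    set 𝓙 : Finset (Finset ℤ) := Tf.image Jf with h𝓙
    have hTmem : ∀ x ∈ Tf, x ∈ Gs ∩ ↑(Im m) := by
      intro x hx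
      rw [hTfset]
      exact hx
    have hQT : ∀ x ∈ Tf, Q x (Mst x) := fun x hx => hQspec x (hTmem x hx)
    have hJsub : ∀ x ∈ Tf, Jf x ⊆ Im m := by
      intro x hx
      have h1 : Jf x ⊆ D x N := D_mono (hMstle x)
      have h2 : D x N = D m N := D_congr le_rfl (hTmem x hx).2
      rw [hJf]
      dsimp only
      calc D x (Mst x) ⊆ D x N := h1
      _ = Im m := h2
    have hdisjJ : ∀ J₁ ∈ 𝓙, ∀ J₂ ∈ 𝓙, J₁ ≠ J₂ → Disjoint J₁ J₂ := by
      intro J₁ hJ₁ J₂ hJ₂ hne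
      obtain ⟨x, hx, rfl⟩ := Finset.mem_image.mp hJ₁
      obtain ⟨y, hy, rfl⟩ := Finset.mem_image.mp hJ₂
      rw [Finset.disjoint_left]
      intro z hz1 hz2
      have e1 : Mst z = Mst x := hJconst x (hQT x hx) z hz1
      have e2 : Mst z = Mst y := hJconst y (hQT y hy) z hz2
      have hJx : Jf z = Jf x := by
        rw [hJf]; dsimp only; rw [e1]; exact D_congr le_rfl hz1
      have hJy : Jf z = Jf y := by
        rw [hJf]; dsimp only; rw [e2]; exact D_congr le_rfl hz2
      exact hne (hJx ▸ hJy)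
    have hcover : Tf ⊆ 𝓙.biUnion id := by
      intro x hx
      rw [Finset.mem_biUnion]
      exact ⟨Jf x, Finset.mem_image_of_mem Jf hx, mem_D x (Mst x)⟩
    have hbUsub : 𝓙.biUnion id ⊆ Phat := by
      apply Finset.biUnion_subset.mpr
      intro J hJ
      obtain ⟨x, hx, rfl⟩ := Finset.mem_image.mp hJ
      exact (hJsub x hx).trans hIsub
    have key : lam * (Tf.card : ℝ≥0∞) ≤ (∑ n ∈ Phat, b' n) := by
      calc lam * (Tf.card : ℝ≥0∞) ≤ lam * ((𝓙.biUnion id).card : ℝ≥0∞) := by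
            apply mul_le_mul_right
            exact_mod_cast Nat.cast_le.mpr (Finset.card_le_card hcover)
      _ = ∑ J ∈ 𝓙, lam * (J.card : ℝ≥0∞) := by
            rw [Finset.card_biUnion (t := id) hdisjJ, Nat.cast_sum, Finset.mul_sum]
            rfl
      _ ≤ ∑ J ∈ 𝓙, ∑ n ∈ J, b' n := by
            apply Finset.sum_le_sum
            intro J hJ
            obtain ⟨x, hx, rfl⟩ := Finset.mem_image.mp hJ
            have hq := hQT x hx
            have hcard : ((Jf x).card : ℝ≥0∞) = 2 ^ (Mst x) := card_D_ennreal _ _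
            rw [hcard]
            exact le_of_lt hq.2
      _ = ∑ n ∈ 𝓙.biUnion id, b' n := by
            rw [Finset.sum_biUnion]
            · rfl
            · intro x hx y hy hne
              exact hdisjJ x hx y hy hne
      _ ≤ ∑ n ∈ Phat, b' n := Finset.sum_le_sum_of_subset hbUsub
    have hsharp : (∑ n ∈ Phat, b' n) ≤ gam * lam * 2 ^ (N+1) := by
      have h1 := le_Msharp (a := a) (D_isInterval m (N+1)) (hIsub hm₀.2)
      have h2 : (∑ n ∈ Phat, b' n) / ((Phat.card : ℝ≥0∞)) ≤ Msharp a m₀ := h1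
      have h3 : Msharp a m₀ ≤ gam * lam := hm₀.1.2
      have hcd : ((Phat.card : ℝ≥0∞)) = 2 ^ (N+1) := card_D_ennreal _ _
      rw [hcd] at h2
      have h4 := h2.trans h3
      rwa [ENNReal.div_le_iff_le_mul (Or.inl (by positivity)) (Or.inl (pow_two_ne_top _))] at h4
      
    have hfinal : lam * (Tf.card : ℝ≥0∞) ≤ lam * (2 * gam * 2 ^ N) := by
      refine (key.trans hsharp).trans (le_of_eq ?_)
      ring
    have hTcard : (Tf.card : ℝ≥0∞) ≤ 2 * gam * 2 ^ N :=
      (ENNReal.mul_le_mul_iff_right hl0 hlt).mp hfinal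
    calc Measure.count (Gs ∩ ↑(Im m)) = (Tf.card : ℝ≥0∞) := by
          rw [hTfset, Measure.count_apply_finset]
    _ ≤ 2 * gam * 2 ^ N := hTcard
    _ = 2 * gam * Measure.count (↑(Im m) : Set ℤ) := by
          rw [Measure.count_apply_finset, hIm]
          dsimp only
          rw [← hN, card_D_ennreal]
  -- global assembly
  set 𝓘 : Set (Finset ℤ) := Im '' E with h𝓘
  have hIdisj : 𝓘.PairwiseDisjoint (fun I : Finset ℤ => (↑I : Set ℤ)) := by
    rintro _ ⟨m₁, hm₁, rfl⟩ _ ⟨m₂, hm₂, rfl⟩ hne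
    refine Set.disjoint_left.mpr ?_
    intro x hx1 hx2
    have e1 := (hImconst m₁ hm₁ x hx1).2
    have e2 := (hImconst m₂ hm₂ x hx2).2
    exact hne (by rw [← e1, ← e2])
  have hGsub : Gs ⊆ ⋃ I ∈ 𝓘, (Gs ∩ ↑I) := by
    intro x hx
    have hxE : x ∈ E := by
      have h2 : lam < 2 * lam := by
        rw [two_mul]
        exact ENNReal.lt_add_right hlt hl0
      exact h2.trans hx.1
    have : x ∈ Gs ∩ ↑(Im x) := ⟨hx, mem_D x (Nst x)⟩
    exact Set.mem_biUnion ⟨x, hxE, rfl⟩ this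
  have hUsub : (⋃ I ∈ 𝓘, (↑I : Set ℤ)) ⊆ E := by
    intro x hx
    simp only [Set.mem_iUnion] at hx
    obtain ⟨I, ⟨m, hmE, rfl⟩, hxI⟩ := hx
    exact (hImconst m hmE x hxI).1
  calc Measure.count Gs ≤ Measure.count (⋃ I ∈ 𝓘, (Gs ∩ ↑I)) := measure_mono hGsub
  _ ≤ ∑' (I : 𝓘), Measure.count (Gs ∩ ↑(I : Finset ℤ)) :=
      measure_biUnion_le _ (Set.to_countable _) _
  _ ≤ ∑' (I : 𝓘), 2 * gam * Measure.count (↑(I : Finset ℤ) : Set ℤ) := by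
      apply ENNReal.tsum_le_tsum
      rintro ⟨I, hI⟩
      obtain ⟨m, hmE, rfl⟩ := hI
      exact hlocal m hmE
  _ = 2 * gam * ∑' (I : 𝓘), Measure.count (↑(I : Finset ℤ) : Set ℤ) :=
      ENNReal.tsum_mul_left
  _ = 2 * gam * Measure.count (⋃ I ∈ 𝓘, (↑I : Set ℤ)) := by
      rw [measure_biUnion (Set.to_countable _) hIdisj
        (fun I _ => (I : Finset ℤ).measurableSet)]
  _ ≤ 2 * gam * Measure.count E := mul_le_mul_right (measure_mono hUsub) _


instance : SFinite (Measure.count : Measure ℤ) := by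
  have h : (Measure.count : Measure ℤ) = Measure.sum Measure.dirac := rfl
  rw [h]; infer_instance

lemma chebyshev (f : ℤ → ℝ≥0∞) {p : ℝ} (hp : 0 ≤ p) (lam : ℝ≥0∞) :
    lam ^ p * Measure.count {m : ℤ | lam < f m} ≤ ∑' m, f m ^ p := by
  have h1 : {m : ℤ | lam < f m} ⊆ {m : ℤ | lam ^ p ≤ f m ^ p} :=
    fun x hx => ENNReal.rpow_le_rpow (le_of_lt hx) hp
  calc lam ^ p * Measure.count {m : ℤ | lam < f m}
      ≤ lam ^ p * Measure.count {m : ℤ | lam ^ p ≤ f m ^ p} :=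
        mul_le_mul_right (measure_mono h1) _
  _ ≤ ∫⁻ m, f m ^ p ∂Measure.count :=
        mul_meas_ge_le_lintegral₀ (measurable_of_countable _).aemeasurable _
  _ = ∑' m, f m ^ p := lintegral_count _

lemma exists_bound (a : ℤ → ℝ) {p : ℝ} (hp : 0 ≤ p)
    (hK : (∑' m : ℤ, Md a m ^ p) ≠ ⊤) {lam : ℝ≥0∞} (hl0 : lam ≠ 0) (hlt : lam ≠ ⊤) :
    ∃ N₁ : ℕ, ∀ m N, N₁ < N → (∑ k ∈ D m N, ENNReal.ofReal |a k|) ≤ lam * 2 ^ N := by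
  set K := ∑' m : ℤ, Md a m ^ p with hKdef
  have hlp0 : lam ^ p ≠ 0 := (ENNReal.rpow_pos (pos_iff_ne_zero.mpr hl0) hlt).ne'
  have hEb : Measure.count {m : ℤ | lam < Md a m} ≤ K / lam ^ p := by
    rw [ENNReal.le_div_iff_mul_le (Or.inl hlp0)
      (Or.inl (ENNReal.rpow_ne_top_of_nonneg hp hlt)), mul_comm]
    exact chebyshev _ hp lam
  obtain ⟨n, hn⟩ := ENNReal.exists_nat_gt (ENNReal.div_lt_top hK hlp0).ne
  refine ⟨n, fun m N hN => ?_⟩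
  by_contra hc
  push_neg at hc
  have hsub : (↑(D m N) : Set ℤ) ⊆ {m : ℤ | lam < Md a m} := by
    intro m' hm'
    refine lt_of_lt_of_le ?_ (le_Md (N := N) (by omega) hm')
    rwa [ENNReal.lt_div_iff_mul_lt (Or.inl (by positivity)) (Or.inl (by simp))]
  have h2N : ((2:ℝ≥0∞)) ^ N ≤ Measure.count {m : ℤ | lam < Md a m} := by
    calc ((2:ℝ≥0∞)) ^ N = Measure.count (↑(D m N) : Set ℤ) := by
          rw [Measure.count_apply_finset, card_D_ennreal]
    _ ≤ _ := measure_mono hsub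
  have hNlt : (n : ℝ≥0∞) < 2 ^ N := by
    have h1 : (n : ℕ) < 2 ^ N := lt_of_lt_of_le hN (Nat.lt_two_pow_self (n := N)).le
    calc (n : ℝ≥0∞) < (((2:ℕ) ^ N : ℕ) : ℝ≥0∞) := by exact_mod_cast h1
    _ = 2 ^ N := by push_cast; ring
  exact absurd (lt_of_le_of_lt (h2N.trans hEb) (hn.trans hNlt)) (lt_irrefl _)

end FS

open FS

/-- `∑ (M_d a)ᵖ ≤ C ∑ (M^# a)ᵖ` for nonnegative `a ∈ ℓᵖ(ℤ)`, with `C` depending only on `p`. -/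
theorem statement7 (p : ℝ) (hp1 : 1 < p) :
    ∃ C : ℝ≥0∞, 0 < C ∧ C ≠ ⊤ ∧
      ∀ a : ℤ → ℝ, (∀ m : ℤ, 0 ≤ a m) → (Summable fun m : ℤ => |a m| ^ p) →
        (∑' m : ℤ, Md a m ^ p) ≠ ⊤ →
        ∑' m : ℤ, Md a m ^ p ≤ C * ∑' m : ℤ, Msharp a m ^ p := by
  classical
  have hp0 : (0:ℝ) < p := lt_trans one_pos hp1
  set T : ℝ≥0∞ := 2 with hT
  have hT0 : T ≠ 0 := by norm_num [hT]
  have hTt : T ≠ ⊤ := by norm_num [hT]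
  have hTpow_ne_top : ∀ y : ℝ, T ^ y ≠ ⊤ := by
    intro y
    simp [ENNReal.rpow_eq_top_iff, hT]
  set C : ℝ≥0∞ := T ^ (p + 1 + (p + 2) * p) with hC
  have hC0 : 0 < C := ENNReal.rpow_pos (by norm_num [hT]) hTt
  have hCt : C ≠ ⊤ := hTpow_ne_top _
  refine ⟨C, hC0, hCt, ?_⟩
  intro a ha _hsum hK
  by_cases hS : (∑' m : ℤ, Msharp a m ^ p) = ⊤
  · rw [hS, ENNReal.mul_top hC0.ne']
    exact le_top
  set K := ∑' m : ℤ, Md a m ^ p with hKdef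
  set S := ∑' m : ℤ, Msharp a m ^ p with hSdef
  have hFfin : ∀ m, Md a m ≠ ⊤ := by
    intro m hm
    apply hK
    have h1 : Md a m ^ p = ⊤ := by rw [hm]; exact ENNReal.top_rpow_of_pos hp0
    exact top_le_iff.mp (h1 ▸ ENNReal.le_tsum m)
  have hGfin : ∀ m, Msharp a m ≠ ⊤ := by
    intro m hm
    apply hS
    have h1 : Msharp a m ^ p = ⊤ := by rw [hm]; exact ENNReal.top_rpow_of_pos hp0
    exact top_le_iff.mp (h1 ▸ ENNReal.le_tsum m)
  set gr : ℝ := (2:ℝ) ^ (-(p+2)) with hgr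
  have hgr0 : 0 < gr := Real.rpow_pos_of_pos (by norm_num) _
  set gam : ℝ≥0∞ := ENNReal.ofReal gr with hgam
  have hgam_eq : gam = T ^ (-(p+2)) := by
    rw [hgam, hgr, hT, ← ENNReal.ofReal_rpow_of_pos (by norm_num : (0:ℝ) < 2)]
    norm_num
  have hgamt : gam ≠ ⊤ := ENNReal.ofReal_ne_top
  have hgam0 : gam ≠ 0 := by
    rw [hgam]
    exact (ENNReal.ofReal_pos.mpr hgr0).ne'
  -- layer cake converter
  have conv : ∀ (g : ℤ → ℝ≥0∞), (∀ m, g m ≠ ⊤) → ∀ c : ℝ, 0 < c →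
      ∑' m : ℤ, (g m / ENNReal.ofReal c) ^ p
        = ENNReal.ofReal p * ∫⁻ t in Set.Ioi (0:ℝ),
            Measure.count {m : ℤ | t < (g m).toReal / c} * ENNReal.ofReal (t ^ (p-1)) := by
    intro g hg c hc
    have h1 : ∀ m, ENNReal.ofReal (((g m).toReal / c) ^ p) = (g m / ENNReal.ofReal c) ^ p := by
      intro m
      rw [← ENNReal.ofReal_rpow_of_nonneg (div_nonneg ENNReal.toReal_nonneg hc.le) hp0.le,
        ENNReal.ofReal_div_of_pos hc, ENNReal.ofReal_toReal (hg m)]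
    calc ∑' m : ℤ, (g m / ENNReal.ofReal c) ^ p
        = ∑' m : ℤ, ENNReal.ofReal (((g m).toReal / c) ^ p) := tsum_congr fun m => (h1 m).symm
    _ = ∫⁻ m, ENNReal.ofReal (((g m).toReal / c) ^ p) ∂Measure.count :=
        (lintegral_count _).symm
    _ = _ := lintegral_rpow_eq_lintegral_meas_lt_mul Measure.count
        (Filter.Eventually.of_forall fun m => div_nonneg ENNReal.toReal_nonneg hc.le)
        (measurable_of_countable _).aemeasurable hp0
  have hdiv : ∀ (g : ℤ → ℝ≥0∞) (c : ℝ≥0∞),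
      ∑' m : ℤ, (g m / c) ^ p = (∑' m : ℤ, g m ^ p) / c ^ p := by
    intro g c
    simp_rw [ENNReal.div_rpow_of_nonneg _ _ hp0.le, ENNReal.div_eq_inv_mul]
    rw [ENNReal.tsum_mul_left]
  have hKint : K = ENNReal.ofReal p * ∫⁻ t in Set.Ioi (0:ℝ),
      Measure.count {m : ℤ | t < (Md a m).toReal} * ENNReal.ofReal (t ^ (p-1)) := by
    have h := conv (Md a) hFfin 1 one_pos
    simp only [ENNReal.ofReal_one, div_one] at h
    rw [hKdef, ← h]
  have hhalf : K / T ^ p = ENNReal.ofReal p * ∫⁻ t in Set.Ioi (0:ℝ),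
      Measure.count {m : ℤ | t < (Md a m).toReal / 2} * ENNReal.ofReal (t ^ (p-1)) := by
    have h := conv (Md a) hFfin 2 (by norm_num)
    rw [hdiv, ENNReal.ofReal_ofNat, ← hT] at h
    rw [hKdef, ← h]
  have hgamint : S / gam ^ p = ENNReal.ofReal p * ∫⁻ t in Set.Ioi (0:ℝ),
      Measure.count {m : ℤ | t < (Msharp a m).toReal / gr} * ENNReal.ofReal (t ^ (p-1)) := by
    have h := conv (Msharp a) hGfin gr hgr0
    rw [hdiv, ← hgam] at h
    rw [hSdef, ← h]
  -- pointwise good-lambda inequality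
  have hptw : ∀ t : ℝ, t ∈ Set.Ioi (0:ℝ) →
      Measure.count {m : ℤ | t < (Md a m).toReal / 2}
        ≤ 2 * gam * Measure.count {m : ℤ | t < (Md a m).toReal}
          + Measure.count {m : ℤ | t < (Msharp a m).toReal / gr} := by
    intro t ht
    rw [Set.mem_Ioi] at ht
    set X := ENNReal.ofReal t with hX
    have hX0 : X ≠ 0 := (ENNReal.ofReal_pos.mpr ht).ne'
    have hXt : X ≠ ⊤ := ENNReal.ofReal_ne_top
    obtain ⟨N₁, hbd⟩ := exists_bound a hp0.le hK hX0 hXt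
    have hgl := goodlambda a ha X gam hX0 hXt N₁ hbd
    have hset1 : {m : ℤ | t < (Md a m).toReal / 2} = {m : ℤ | 2 * X < Md a m} := by
      ext m
      simp only [Set.mem_setOf_eq]
      have h2X : 2 * X = ENNReal.ofReal (2 * t) := by
        rw [ENNReal.ofReal_mul (by norm_num), ENNReal.ofReal_ofNat]
      rw [h2X, ENNReal.ofReal_lt_iff_lt_toReal (by positivity) (hFfin m)]
      constructor <;> intro h <;> linarith
    have hset1' : {m : ℤ | X < Md a m} = {m : ℤ | t < (Md a m).toReal} := by
      ext m
      simp only [Set.mem_setOf_eq]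
      rw [hX, ENNReal.ofReal_lt_iff_lt_toReal ht.le (hFfin m)]
    have hset2 : {m : ℤ | gam * X < Msharp a m} = {m : ℤ | t < (Msharp a m).toReal / gr} := by
      ext m
      simp only [Set.mem_setOf_eq]
      have hgX : gam * X = ENNReal.ofReal (gr * t) := by
        rw [ENNReal.ofReal_mul hgr0.le, ← hgam]
      rw [hgX, ENNReal.ofReal_lt_iff_lt_toReal (by positivity) (hGfin m),
        lt_div_iff₀ hgr0]
      constructor <;> intro h <;> linarith
    have hsub : {m : ℤ | 2 * X < Md a m}
        ⊆ {m : ℤ | 2 * X < Md a m ∧ Msharp a m ≤ gam * X} ∪ {m : ℤ | gam * X < Msharp a m} := by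
      intro x hx
      rcases le_or_gt (Msharp a x) (gam * X) with h | h
      · exact Or.inl ⟨hx, h⟩
      · exact Or.inr h
    calc Measure.count {m : ℤ | t < (Md a m).toReal / 2}
        = Measure.count {m : ℤ | 2 * X < Md a m} := by rw [hset1]
    _ ≤ Measure.count ({m : ℤ | 2 * X < Md a m ∧ Msharp a m ≤ gam * X}
          ∪ {m : ℤ | gam * X < Msharp a m}) := measure_mono hsub
    _ ≤ Measure.count {m : ℤ | 2 * X < Md a m ∧ Msharp a m ≤ gam * X}
          + Measure.count {m : ℤ | gam * X < Msharp a m} := measure_union_le _ _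
    _ ≤ 2 * gam * Measure.count {m : ℤ | X < Md a m}
          + Measure.count {m : ℤ | gam * X < Msharp a m} := add_le_add_left hgl _
    _ = _ := by rw [hset1', hset2]
  -- integrate the pointwise inequality
  have hwmeas : Measurable (fun t : ℝ => ENNReal.ofReal (t ^ (p-1))) :=
    ENNReal.measurable_ofReal.comp
      (Real.continuous_rpow_const (by linarith)).measurable
  have hAanti : Antitone (fun t : ℝ => Measure.count {m : ℤ | t < (Md a m).toReal}) :=
    fun s t hst => measure_mono (fun x hx => lt_of_le_of_lt hst hx)
  have hBanti : Antitone (fun t : ℝ => Measure.count {m : ℤ | t < (Msharp a m).toReal / gr}) :=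
    fun s t hst => measure_mono (fun x hx => lt_of_le_of_lt hst hx)
  have hint : (∫⁻ t in Set.Ioi (0:ℝ),
        Measure.count {m : ℤ | t < (Md a m).toReal / 2} * ENNReal.ofReal (t ^ (p-1)))
      ≤ 2 * gam * (∫⁻ t in Set.Ioi (0:ℝ),
          Measure.count {m : ℤ | t < (Md a m).toReal} * ENNReal.ofReal (t ^ (p-1)))
        + ∫⁻ t in Set.Ioi (0:ℝ),
            Measure.count {m : ℤ | t < (Msharp a m).toReal / gr} * ENNReal.ofReal (t ^ (p-1)) := by
    have hmeas1 : Measurable (fun t : ℝ =>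
        2 * gam * (Measure.count {m : ℤ | t < (Md a m).toReal} * ENNReal.ofReal (t ^ (p-1)))) :=
      (hAanti.measurable.mul hwmeas).const_mul _
    have hmeas2 : Measurable (fun t : ℝ =>
        Measure.count {m : ℤ | t < (Msharp a m).toReal / gr} * ENNReal.ofReal (t ^ (p-1))) :=
      hBanti.measurable.mul hwmeas
    calc (∫⁻ t in Set.Ioi (0:ℝ),
          Measure.count {m : ℤ | t < (Md a m).toReal / 2} * ENNReal.ofReal (t ^ (p-1)))
        ≤ ∫⁻ t in Set.Ioi (0:ℝ),
            (2 * gam * (Measure.count {m : ℤ | t < (Md a m).toReal} * ENNReal.ofReal (t ^ (p-1)))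
             + Measure.count {m : ℤ | t < (Msharp a m).toReal / gr} * ENNReal.ofReal (t ^ (p-1))) := by
          refine setLIntegral_mono (hmeas1.add hmeas2) (fun t ht => ?_)
          calc Measure.count {m : ℤ | t < (Md a m).toReal / 2} * ENNReal.ofReal (t ^ (p-1))
              ≤ (2 * gam * Measure.count {m : ℤ | t < (Md a m).toReal}
                  + Measure.count {m : ℤ | t < (Msharp a m).toReal / gr})
                  * ENNReal.ofReal (t ^ (p-1)) := mul_le_mul_left (hptw t ht) _
          _ = _ := by ring
    _ = _ := by
        rw [lintegral_add_left hmeas1, lintegral_const_mul' _ _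
          (ENNReal.mul_ne_top (by norm_num) hgamt)]
  -- combine
  have hmain : K / T ^ p ≤ 2 * gam * K + S / gam ^ p := by
    calc K / T ^ p = _ := hhalf
    _ ≤ ENNReal.ofReal p * (2 * gam * (∫⁻ t in Set.Ioi (0:ℝ),
          Measure.count {m : ℤ | t < (Md a m).toReal} * ENNReal.ofReal (t ^ (p-1)))
        + ∫⁻ t in Set.Ioi (0:ℝ),
            Measure.count {m : ℤ | t < (Msharp a m).toReal / gr} * ENNReal.ofReal (t ^ (p-1))) :=
        mul_le_mul_right hint _
    _ = 2 * gam * (ENNReal.ofReal p * ∫⁻ t in Set.Ioi (0:ℝ),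
          Measure.count {m : ℤ | t < (Md a m).toReal} * ENNReal.ofReal (t ^ (p-1)))
        + ENNReal.ofReal p * ∫⁻ t in Set.Ioi (0:ℝ),
            Measure.count {m : ℤ | t < (Msharp a m).toReal / gr} * ENNReal.ofReal (t ^ (p-1)) := by
        ring
    _ = 2 * gam * K + S / gam ^ p := by rw [← hKint, ← hgamint]
  -- arithmetic endgame
  have e2g : 2 * gam = T ^ (-(p+1)) := by
    rw [hgam_eq, show -(p+1) = 1 + -(p+2) by ring, ENNReal.rpow_add _ _ hT0 hTt,
      ENNReal.rpow_one, hT]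
  have ediv : K / T ^ p = T ^ (-p) * K := by
    rw [ENNReal.rpow_neg, ENNReal.div_eq_inv_mul]
  have eS : S / gam ^ p = T ^ ((p+2)*p) * S := by
    rw [hgam_eq, ← ENNReal.rpow_mul, show -(p+2)*p = -((p+2)*p) by ring,
      ENNReal.rpow_neg, div_eq_mul_inv, inv_inv, mul_comm]
  have esplit : T ^ (-p) = T ^ (-(p+1)) + T ^ (-(p+1)) := by
    calc T ^ (-p) = T ^ (1 + -(p+1)) := by congr 1; ring
    _ = T ^ (1:ℝ) * T ^ (-(p+1)) := ENNReal.rpow_add _ _ hT0 hTt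
    _ = T ^ (-(p+1)) + T ^ (-(p+1)) := by rw [ENNReal.rpow_one, hT, two_mul]
  have hfin1 : T ^ (-(p+1)) * K ≠ ⊤ := ENNReal.mul_ne_top (hTpow_ne_top _) hK
  have hstep : T ^ (-(p+1)) * K ≤ T ^ ((p+2)*p) * S := by
    have h := hmain
    rw [ediv, e2g, eS, esplit, add_mul] at h
    exact (ENNReal.add_le_add_iff_left hfin1).mp h
  calc K = T ^ (p+1) * (T ^ (-(p+1)) * K) := by
        rw [← mul_assoc, ← ENNReal.rpow_add _ _ hT0 hTt,
          show p + 1 + -(p+1) = 0 by ring, ENNReal.rpow_zero, one_mul]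
  _ ≤ T ^ (p+1) * (T ^ ((p+2)*p) * S) := mul_le_mul_right hstep _
  _ = C * S := by rw [← mul_assoc, ← ENNReal.rpow_add _ _ hT0 hTt, hC]
end

section
/- The Hardy–Littlewood maximal operator M is of weak type (1,1) on ℤ: there exists a constant C > 0 such that for every a ∈ ℓ^1(ℤ) and every λ > 0, the cardinality of {m ∈ ℤ : M a(m) > λ} is at most (C/λ) Σ_{k∈ℤ} |a(k)|. -/
open scoped ENNReal
open MeasureTheory

/-- Vitali-type covering lemma on ℤ. -/
lemma vitaliZ (f : ℤ → ℝ≥0∞) (lam : ℝ≥0∞) (lo hi : ℤ → ℤ) :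
    ∀ F : Finset ℤ, ∀ A : Finset ℤ,
    (∀ m ∈ F, lo m ≤ m ∧ m ≤ hi m ∧ Finset.Icc (lo m) (hi m) ⊆ A ∧
       lam * (Finset.Icc (lo m) (hi m)).card < ∑ n ∈ Finset.Icc (lo m) (hi m), f n) →
    lam * F.card ≤ 3 * ∑ n ∈ A, f n := by
  classical
  intro F
  induction F using Finset.strongInduction with
  | _ F ih =>
    intro A hF
    rcases F.eq_empty_or_nonempty with rfl | hne
    · simp
    obtain ⟨m₀, hm₀F, hmax⟩ := F.exists_max_image (fun m => hi m - lo m) hne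
    set I₀ := Finset.Icc (lo m₀) (hi m₀) with hI₀
    obtain ⟨h1, h2, h3, h4⟩ := hF m₀ hm₀F
    have hm₀I : m₀ ∈ I₀ := Finset.mem_Icc.mpr ⟨h1, h2⟩
    set p : ℤ → Prop := fun m => Disjoint (Finset.Icc (lo m) (hi m)) I₀ with hp
    set F' := F.filter p with hF'
    set Fb := F.filter (fun m => ¬ p m) with hFb
    have hFsub : F' ⊂ F := by
      refine Finset.filter_ssubset.mpr ⟨m₀, hm₀F, ?_⟩
      intro hd
      exact Finset.disjoint_left.mp hd hm₀I hm₀I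
    -- bad set is contained in the triple interval
    have hFbsub : Fb ⊆ Finset.Icc (2 * lo m₀ - hi m₀) (2 * hi m₀ - lo m₀) := by
      intro m hm
      rw [hFb, Finset.mem_filter] at hm
      obtain ⟨hmF, hnd⟩ := hm
      obtain ⟨x, hx1, hx2⟩ := Finset.not_disjoint_iff.mp hnd
      rw [Finset.mem_Icc] at hx1 hx2
      obtain ⟨g1, g2, _, _⟩ := hF m hmF
      have hlen := hmax m hmF
      rw [Finset.mem_Icc]
      omega
    have hcardFb : Fb.card ≤ 3 * I₀.card := by
      calc Fb.card ≤ (Finset.Icc (2 * lo m₀ - hi m₀) (2 * hi m₀ - lo m₀)).card :=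
            Finset.card_le_card hFbsub
        _ ≤ 3 * I₀.card := by
            rw [hI₀, Int.card_Icc, Int.card_Icc]; omega
    have hbad : lam * Fb.card ≤ 3 * ∑ n ∈ I₀, f n := by
      calc lam * Fb.card ≤ lam * ((3 * I₀.card : ℕ) : ℝ≥0∞) :=
            mul_le_mul_right (by exact_mod_cast hcardFb) lam
        _ = 3 * (lam * I₀.card) := by push_cast; ring
        _ ≤ 3 * ∑ n ∈ I₀, f n := by gcongr
    have hgood : lam * F'.card ≤ 3 * ∑ n ∈ A \ I₀, f n := by
      refine ih F' hFsub (A \ I₀) ?_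
      intro m hm
      rw [hF', Finset.mem_filter] at hm
      obtain ⟨hmF, hd⟩ := hm
      obtain ⟨g1, g2, g3, g4⟩ := hF m hmF
      exact ⟨g1, g2, Finset.subset_sdiff.mpr ⟨g3, hd⟩, g4⟩
    have hcardsplit : F'.card + Fb.card = F.card :=
      Finset.card_filter_add_card_filter_not p
    calc lam * F.card = lam * F'.card + lam * Fb.card := by
          rw [← hcardsplit]; push_cast; ring
      _ ≤ 3 * ∑ n ∈ A \ I₀, f n + 3 * ∑ n ∈ I₀, f n := add_le_add hgood hbad
      _ = 3 * (∑ n ∈ A \ I₀, f n + ∑ n ∈ I₀, f n) := by ring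
      _ = 3 * ∑ n ∈ A, f n := by rw [Finset.sum_sdiff h3]

/-- The Hardy–Littlewood maximal operator on ℤ is of weak type (1,1). -/
theorem statement8 :
    ∃ C : ℝ, 0 < C ∧
      ∀ a : ℤ → ℝ, (Summable fun m : ℤ => |a m|) → ∀ lam : ℝ, 0 < lam →
        Measure.count {m : ℤ | ENNReal.ofReal lam < Mop a m} ≤
          ENNReal.ofReal (C / lam * ∑' k : ℤ, |a k|) := by
  classical
  refine ⟨3, by norm_num, ?_⟩
  intro a ha lam hlam
  set f : ℤ → ℝ≥0∞ := fun n => ENNReal.ofReal |a n| with hf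
  set S : ℝ := ∑' k : ℤ, |a k| with hS
  set lam' : ℝ≥0∞ := ENNReal.ofReal lam with hlam'
  have hlam'0 : lam' ≠ 0 := by
    exact (ENNReal.ofReal_pos.mpr hlam).ne'
  have hlam't : lam' ≠ ⊤ := ENNReal.ofReal_ne_top
  set E : Set ℤ := {m : ℤ | lam' < Mop a m} with hE
  -- for each point of E choose a good interval
  have hEx : ∀ m ∈ E, ∃ q : ℤ × ℤ, q.1 ≤ m ∧ m ≤ q.2 ∧
      lam' * ((Finset.Icc q.1 q.2).card : ℝ≥0∞) < ∑ n ∈ Finset.Icc q.1 q.2, f n := by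
    intro m hm
    rw [hE, Set.mem_setOf_eq, Mop] at hm
    simp only [lt_iSup_iff] at hm
    obtain ⟨I, hI, hmI, hlt⟩ := hm
    obtain ⟨u, v, huv, rfl⟩ := hI
    rw [Finset.mem_Icc] at hmI
    have hcpos : 0 < (Finset.Icc u v).card := by
      rw [Int.card_Icc]; omega
    have hc0 : ((Finset.Icc u v).card : ℝ≥0∞) ≠ 0 := by
      exact_mod_cast hcpos.ne'
    refine ⟨(u, v), hmI.1, hmI.2, ?_⟩
    exact (ENNReal.lt_div_iff_mul_lt (Or.inl hc0) (Or.inl (ENNReal.natCast_ne_top _))).mp hlt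
  have hEx' : ∀ m : ℤ, ∃ q : ℤ × ℤ, m ∈ E → (q.1 ≤ m ∧ m ≤ q.2 ∧
      lam' * ((Finset.Icc q.1 q.2).card : ℝ≥0∞) < ∑ n ∈ Finset.Icc q.1 q.2, f n) := by
    intro m
    by_cases hm : m ∈ E
    · obtain ⟨q, hq⟩ := hEx m hm
      exact ⟨q, fun _ => hq⟩
    · exact ⟨(m, m), fun h => absurd h hm⟩
  choose q hq using hEx'
  set lo : ℤ → ℤ := fun m => (q m).1 with hlo
  set hi : ℤ → ℤ := fun m => (q m).2 with hhi
  have hspec : ∀ m ∈ E, lo m ≤ m ∧ m ≤ hi m ∧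
      lam' * ((Finset.Icc (lo m) (hi m)).card : ℝ≥0∞) < ∑ n ∈ Finset.Icc (lo m) (hi m), f n :=
    fun m hm => hq m hm
  -- any finite subset of E has controlled cardinality
  have hFin : ∀ F : Finset ℤ, ↑F ⊆ E → lam' * F.card ≤ 3 * ENNReal.ofReal S := by
    intro F hFE
    have hA : ∀ m ∈ F, Finset.Icc (lo m) (hi m) ⊆ F.biUnion (fun m => Finset.Icc (lo m) (hi m)) :=
      fun m hm => Finset.subset_biUnion_of_mem (fun m => Finset.Icc (lo m) (hi m)) hm
    set A := F.biUnion (fun m => Finset.Icc (lo m) (hi m)) with hAdef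
    have h1 : lam' * F.card ≤ 3 * ∑ n ∈ A, f n := by
      refine vitaliZ f lam' lo hi F A ?_
      intro m hm
      obtain ⟨g1, g2, g3⟩ := hspec m (hFE (Finset.mem_coe.mpr hm))
      exact ⟨g1, g2, hA m hm, g3⟩
    have h2 : ∑ n ∈ A, f n ≤ ENNReal.ofReal S := by
      rw [hS, ENNReal.ofReal_tsum_of_nonneg (fun n => abs_nonneg _) ha]
      exact ENNReal.sum_le_tsum A
    calc lam' * F.card ≤ 3 * ∑ n ∈ A, f n := h1
      _ ≤ 3 * ENNReal.ofReal S := by gcongr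
  have hRHS : ENNReal.ofReal ((3:ℝ) / lam * S) = 3 * ENNReal.ofReal S / lam' := by
    have hS0 : 0 ≤ S := tsum_nonneg (fun n => abs_nonneg _)
    rw [show (3:ℝ) / lam * S = 3 * S / lam by ring, ENNReal.ofReal_div_of_pos hlam,
      ENNReal.ofReal_mul (by norm_num : (0:ℝ) ≤ 3)]
    norm_num [hlam']
  rw [hRHS]
  have hmeas : MeasurableSet E := trivial
  rw [Measure.count_apply hmeas, ← ENNReal.tsum_set_one]
  have : (∑' (_ : ↑E), (1:ℝ≥0∞)) = ⨆ s : Finset ↑E, (s.card : ℝ≥0∞) := by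
    rw [ENNReal.tsum_eq_iSup_sum]
    simp
  rw [this]
  refine iSup_le ?_
  intro s
  set F := s.image (Subtype.val) with hFdef
  have hcard : F.card = s.card := Finset.card_image_of_injective s Subtype.val_injective
  have hFE : ↑F ⊆ E := by
    intro m hm
    rw [hFdef] at hm
    simp only [Finset.coe_image, Set.mem_image] at hm
    obtain ⟨⟨x, hx⟩, _, rfl⟩ := hm
    exact hx
  have := hFin F hFE
  rw [hcard] at this
  exact (ENNReal.le_div_iff_mul_le (Or.inl hlam'0) (Or.inl hlam't)).mpr
    (by rwa [mul_comm])
end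

section
/- Let a ∈ ℓ^1(ℤ), let λ > 0, and let {I_j} be a family of pairwise disjoint dyadic intervals such that λ < (1/|I_j|) Σ_{k∈I_j} |a(k)| ≤ 2λ for every j and |a(n)| ≤ λ for every n ∉ ∪_j I_j. Then {m ∈ ℤ : M′a(m) > 4λ} ⊆ ∪_j 3I_j, where for a dyadic interval I = I_{N,j}, 3I denotes the interval {(j−2)2^N + 1, …, (j+1)2^N}. -/
open scoped ENNReal
open MeasureTheory

/-- The tripled dyadic interval `3I_{N,j} = {(j-2)2^N + 1, …, (j+1)·2^N}`. -/
noncomputable def tripleI (N : ℕ) (j : ℤ) : Finset ℤ := Finset.Icc ((j - 2) * 2 ^ N + 1) ((j + 1) * 2 ^ N)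

lemma dyadic_sub (Np : ℤ) (hp : 2 ≤ Np) (jj m r : ℤ) (hr : 1 ≤ r)
    (hm : m ∉ Finset.Icc ((jj - 2) * Np + 1) ((jj + 1) * Np))
    (hne : ∃ k, k ∈ Finset.Icc ((jj - 1) * Np + 1) (jj * Np) ∩ Finset.Icc (m - r) (m + r)) :
    Finset.Icc ((jj - 1) * Np + 1) (jj * Np) ⊆ Finset.Icc (m - 2 * r + 2) (m + 2 * r - 2) := by
  obtain ⟨k, hk⟩ := hne
  simp only [Finset.mem_inter, Finset.mem_Icc] at hk hm
  intro x hx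
  simp only [Finset.mem_Icc] at hx ⊢
  have h1 : jj * Np = (jj - 1) * Np + Np := by ring
  have h2 : (jj - 2) * Np + 1 = (jj - 1) * Np + 1 - Np := by ring
  have h3 : (jj + 1) * Np = (jj - 1) * Np + 2 * Np := by ring
  omega

lemma czkey {ι : Type*} (a : ℤ → ℝ) (lam : ℝ) (hlam : 0 < lam)
    (N : ι → ℕ) (j : ι → ℤ) (hN : ∀ i, 0 < N i)
    (hdisj : Pairwise fun i i' => Disjoint (dyadicI (N i) (j i)) (dyadicI (N i') (j i')))
    (havg : ∀ i, (∑ k ∈ dyadicI (N i) (j i), |a k|) ≤ 2 * lam * ((dyadicI (N i) (j i)).card : ℝ))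
    (hout : ∀ n : ℤ, (∀ i, n ∉ dyadicI (N i) (j i)) → |a n| ≤ lam)
    (m : ℤ) (hm : ∀ i, m ∉ tripleI (N i) (j i)) (r : ℕ) (hr : 0 < r) :
    ∑ k ∈ Finset.Icc (m - (r : ℤ)) (m + (r : ℤ)), |a k| ≤ 4 * lam * (2 * r) := by
  classical
  set B := Finset.Icc (m - (r:ℤ)) (m + (r:ℤ)) with hB
  set W := Finset.Icc (m - 2*(r:ℤ) + 2) (m + 2*(r:ℤ) - 2) with hW
  have hsub : ∀ i, (dyadicI (N i) (j i) ∩ B).Nonempty → dyadicI (N i) (j i) ⊆ W := by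
    intro i hi
    have hp : (2:ℤ) ≤ 2 ^ (N i) := by
      calc (2:ℤ) = 2^1 := by norm_num
      _ ≤ 2^(N i) := pow_le_pow_right₀ (by norm_num) (hN i)
    exact dyadic_sub _ hp (j i) m r (by exact_mod_cast hr) (hm i) hi
  set I : Finset (Finset ℤ) := W.powerset.filter
      (fun s => (∃ i, s = dyadicI (N i) (j i)) ∧ (s ∩ B).Nonempty) with hI
  set U := I.biUnion id with hU
  have hUW : U ⊆ W := by
    intro k hk
    rw [hU, Finset.mem_biUnion] at hk
    obtain ⟨s, hs, hks⟩ := hk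
    rw [hI, Finset.mem_filter, Finset.mem_powerset] at hs
    exact hs.1 hks
  have hmemI : ∀ i k, k ∈ B → k ∈ dyadicI (N i) (j i) → dyadicI (N i) (j i) ∈ I := by
    intro i k hkB hkd
    rw [hI, Finset.mem_filter, Finset.mem_powerset]
    have hne : (dyadicI (N i) (j i) ∩ B).Nonempty := ⟨k, Finset.mem_inter.mpr ⟨hkd, hkB⟩⟩
    exact ⟨hsub i hne, ⟨i, rfl⟩, hne⟩
  have hpd : (I : Set (Finset ℤ)).PairwiseDisjoint id := by
    intro s hs t ht hst
    rw [Finset.mem_coe, hI, Finset.mem_filter] at hs ht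
    obtain ⟨i1, rfl⟩ := hs.2.1
    obtain ⟨i2, rfl⟩ := ht.2.1
    have : i1 ≠ i2 := fun h => hst (by rw [h])
    exact hdisj this
  -- bound on the outside part
  have h229 : ∑ k ∈ B \ U, |a k| ≤ lam * ((B \ U).card : ℝ) := by
    refine le_trans (Finset.sum_le_card_nsmul _ _ lam ?_) (by simp [nsmul_eq_mul, mul_comm])
    intro k hk
    rw [Finset.mem_sdiff] at hk
    refine hout k fun i hkd => hk.2 ?_
    rw [hU, Finset.mem_biUnion]
    exact ⟨_, hmemI i k hk.1 hkd, hkd⟩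
  -- bound on the inside part
  have hin : ∑ k ∈ B ∩ U, |a k| ≤ 2 * lam * (U.card : ℝ) := by
    have h1 : ∑ k ∈ B ∩ U, |a k| ≤ ∑ k ∈ U, |a k| :=
      Finset.sum_le_sum_of_subset_of_nonneg Finset.inter_subset_right
        (fun _ _ _ => abs_nonneg _)
    have h2 : ∑ k ∈ U, |a k| = ∑ s ∈ I, ∑ k ∈ s, |a k| := by
      rw [hU]; exact Finset.sum_biUnion hpd
    have h3 : ∑ s ∈ I, ∑ k ∈ s, |a k| ≤ ∑ s ∈ I, 2 * lam * (s.card : ℝ) := by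
      apply Finset.sum_le_sum
      intro s hs
      rw [hI, Finset.mem_filter] at hs
      obtain ⟨i, rfl⟩ := hs.2.1
      exact havg i
    have h4 : ∑ s ∈ I, 2 * lam * (s.card : ℝ) = 2 * lam * (U.card : ℝ) := by
      rw [← Finset.mul_sum, hU, Finset.card_biUnion]
      · simp only [id_eq]; push_cast; ring
      · intro s hs t ht hst
        exact hpd hs ht hst
    linarith [h1, h2.le, h3, h4.le]
  -- cardinality facts
  have hBcard : B.card = 2*r + 1 := by rw [hB, Int.card_Icc]; omega
  have hWB : ((W \ B).card : ℝ) ≤ 2*(r:ℝ) - 2 := by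
    have hsub2 : W \ B ⊆ Finset.Icc (m - 2*(r:ℤ) + 2) (m - (r:ℤ) - 1)
        ∪ Finset.Icc (m + (r:ℤ) + 1) (m + 2*(r:ℤ) - 2) := by
      intro x hx
      simp only [Finset.mem_sdiff, Finset.mem_Icc, Finset.mem_union, hW, hB] at hx ⊢
      omega
    have := Finset.card_le_card hsub2
    have h5 := Finset.card_union_le (Finset.Icc (m - 2*(r:ℤ) + 2) (m - (r:ℤ) - 1))
      (Finset.Icc (m + (r:ℤ) + 1) (m + 2*(r:ℤ) - 2))
    rw [Int.card_Icc, Int.card_Icc] at h5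
    have hc : (W \ B).card ≤ (2*(r:ℤ) - 2).toNat := by omega
    have : ((W\B).card : ℝ) ≤ (((2*(r:ℤ) - 2).toNat : ℤ) : ℝ) := by exact_mod_cast hc
    refine this.trans ?_
    have : (((2*(r:ℤ) - 2).toNat : ℤ) : ℝ) = ((2*(r:ℤ) - 2).toNat : ℝ) := by norm_cast
    rw [this]
    have h6 : ((2*(r:ℤ) - 2).toNat : ℤ) ≤ 2*(r:ℤ) - 2 := by omega
    have : (((2*(r:ℤ) - 2).toNat : ℤ) : ℝ) ≤ ((2*(r:ℤ) - 2 : ℤ) : ℝ) := by exact_mod_cast h6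
    push_cast at this ⊢
    linarith
  have hsplit : ∑ k ∈ B ∩ U, |a k| + ∑ k ∈ B \ U, |a k| = ∑ k ∈ B, |a k| :=
    Finset.sum_inter_add_sum_sdiff B U _
  have hc1 : (B \ U).card + (B ∩ U).card = B.card := Finset.card_sdiff_add_card_inter B U
  have hc2 : (U ∩ B).card + (U \ B).card = U.card := Finset.card_inter_add_card_sdiff U B
  have hc3 : (U ∩ B).card ≤ B.card := Finset.card_le_card Finset.inter_subset_right
  have hc4 : (U \ B).card ≤ (W \ B).card :=
    Finset.card_le_card (Finset.sdiff_subset_sdiff hUW le_rfl)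
  have hrR : (1:ℝ) ≤ (r:ℝ) := by exact_mod_cast hr
  have e1 : ((B \ U).card : ℝ) + ((B ∩ U).card : ℝ) = 2*(r:ℝ) + 1 := by
    rw [← Nat.cast_add, hc1, hBcard]; push_cast; ring
  have e2 : ((U.card) : ℝ) = ((U ∩ B).card : ℝ) + ((U \ B).card : ℝ) := by
    rw [← Nat.cast_add, hc2]
  have e3 : ((U ∩ B).card : ℝ) ≤ 2*(r:ℝ) + 1 := by
    calc ((U ∩ B).card : ℝ) ≤ (B.card : ℝ) := by exact_mod_cast hc3
    _ = 2*(r:ℝ) + 1 := by rw [hBcard]; push_cast; ring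
  have e4 : ((U \ B).card : ℝ) ≤ 2*(r:ℝ) - 2 := by
    calc ((U \ B).card : ℝ) ≤ ((W \ B).card : ℝ) := by exact_mod_cast hc4
    _ ≤ 2*(r:ℝ) - 2 := hWB
  have e5 : ((B ∩ U).card : ℝ) = ((U ∩ B).card : ℝ) := by rw [Finset.inter_comm]
  have p3 := mul_le_mul_of_nonneg_left e3 hlam.le
  have p4 := mul_le_mul_of_nonneg_left e4 hlam.le
  nlinarith [hlam, h229, hin, hsplit, e1, e2, e5, p3, p4,
    (Nat.cast_nonneg (B ∩ U).card : (0:ℝ) ≤ _), (Nat.cast_nonneg (B \ U).card : (0:ℝ) ≤ _)]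

/-- If `{I_j}` is a Calderón–Zygmund family at height λ, then `{M′a > 4λ} ⊆ ⋃_j 3I_j`. -/
theorem statement11 {ι : Type*} (a : ℤ → ℝ) (ha : Summable fun m : ℤ => |a m|)
    (lam : ℝ) (hlam : 0 < lam) (N : ι → ℕ) (j : ι → ℤ) (hN : ∀ i, 0 < N i)
    (hdisj : Pairwise fun i i' => Disjoint (dyadicI (N i) (j i)) (dyadicI (N i') (j i')))
    (havg : ∀ i,
      lam < (∑ k ∈ dyadicI (N i) (j i), |a k|) / ((dyadicI (N i) (j i)).card : ℝ) ∧
      (∑ k ∈ dyadicI (N i) (j i), |a k|) / ((dyadicI (N i) (j i)).card : ℝ) ≤ 2 * lam)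
    (hout : ∀ n : ℤ, (∀ i, n ∉ dyadicI (N i) (j i)) → |a n| ≤ lam) :
    {m : ℤ | ENNReal.ofReal (4 * lam) < Mc a m} ⊆
      ⋃ i, (tripleI (N i) (j i) : Set ℤ) := by
  classical
  intro m hm
  simp only [Set.mem_setOf_eq] at hm
  by_contra hcon
  simp only [Set.mem_iUnion, not_exists, Finset.mem_coe] at hcon
  refine absurd hm (not_lt.mpr ?_)
  rw [Mc]
  refine iSup_le fun r => iSup_le fun hr => ?_
  have havg' : ∀ i, (∑ k ∈ dyadicI (N i) (j i), |a k|)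
      ≤ 2 * lam * ((dyadicI (N i) (j i)).card : ℝ) := by
    intro i
    have hcard : 0 < ((dyadicI (N i) (j i)).card : ℝ) := by
      have hne : (dyadicI (N i) (j i)).Nonempty := by
        rw [dyadicI, Finset.nonempty_Icc]
        have h1 : (j i) * 2^(N i) = ((j i) - 1) * 2^(N i) + 2^(N i) := by ring
        have h2 : (1:ℤ) ≤ 2^(N i) := one_le_pow₀ (by norm_num)
        omega
      exact_mod_cast hne.card_pos
    exact (div_le_iff₀ hcard).mp (havg i).2
  have key := czkey a lam hlam N j hN hdisj havg' hout m hcon r hr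
  have hre : ∑ n ∈ Finset.Icc (-(r:ℤ)) (r:ℤ), ENNReal.ofReal |a (m - n)|
      = ENNReal.ofReal (∑ k ∈ Finset.Icc (m - (r:ℤ)) (m + (r:ℤ)), |a k|) := by
    rw [ENNReal.ofReal_sum_of_nonneg (fun _ _ => abs_nonneg _)]
    refine Finset.sum_nbij' (fun n => m - n) (fun k => m - k) ?_ ?_ ?_ ?_ ?_
    · intro n hn; simp only [Finset.mem_Icc] at hn ⊢; omega
    · intro k hk; simp only [Finset.mem_Icc] at hk ⊢; omega
    · intro n _; ring
    · intro k _; ring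
    · intro n _; rfl
  rw [hre]
  have h2r : (2 * (r:ℝ≥0∞)) = ENNReal.ofReal (2 * (r:ℝ)) := by
    rw [ENNReal.ofReal_mul (by norm_num), ENNReal.ofReal_ofNat, ENNReal.ofReal_natCast]
  have hrpos : (0:ℝ) < 2 * (r:ℝ) := by positivity
  rw [h2r, ENNReal.div_le_iff_le_mul (Or.inl (by simp [ENNReal.ofReal_pos.mpr hrpos, ne_of_gt, hr.ne']))
    (Or.inl ENNReal.ofReal_ne_top)]
  rw [← ENNReal.ofReal_mul (by positivity)]
  exact ENNReal.ofReal_le_ofReal (by linarith [key])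
end
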